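/- Let n ∈ {1,2,3}, ν₁,…,νₙ > 0, K a strictly concave strictly monotone kernel function, J an upper semicontinuous n-field function. Then there is at most one equioscillation point, i.e., at most one node system w with m₀(w) = m₁(w) = ⋯ = mₙ(w) (all finite). -/

import Mathlib

open Set

noncomputable section

/-- A kernel function: `[-1,1] → ℝ ∪ {-∞}`, real-valued and concave on `(-1,0)` and on `(0,1)`,
extended continuously (in `EReal`) to the closed subintervals, so that the endpoint values
(in particular `K 0`) are the one-sided limits. -/
def KernelFun (K : ℝ → EReal) : Prop :=
  (∀ t, K t ≠ ⊤) ∧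
  (∀ t ∈ Ioo (-1:ℝ) 0 ∪ Ioo (0:ℝ) 1, K t ≠ ⊥) ∧
  ConcaveOn ℝ (Ioo (-1:ℝ) 0) (fun t => (K t).toReal) ∧
  ConcaveOn ℝ (Ioo (0:ℝ) 1) (fun t => (K t).toReal) ∧
  ContinuousOn K (Icc (-1:ℝ) 0) ∧
  ContinuousOn K (Icc (0:ℝ) 1)

/-- Monotonicity condition (M): nonincreasing on `(-1,0)`, nondecreasing on `(0,1)`. -/
def KMonotone (K : ℝ → EReal) : Prop :=
  AntitoneOn K (Ioo (-1:ℝ) 0) ∧ MonotoneOn K (Ioo (0:ℝ) 1)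

/-- Strict monotonicity (SM): strictly decreasing on `[-1,0)`, strictly increasing on `(0,1]`. -/
def KStrictMonotone (K : ℝ → EReal) : Prop :=
  StrictAntiOn K (Ico (-1:ℝ) 0) ∧ StrictMonoOn K (Ioc (0:ℝ) 1)

/-- Strict concavity on both `(-1,0)` and `(0,1)`. -/
def KStrictConcave (K : ℝ → EReal) : Prop :=
  StrictConcaveOn ℝ (Ioo (-1:ℝ) 0) (fun t => (K t).toReal) ∧
  StrictConcaveOn ℝ (Ioo (0:ℝ) 1) (fun t => (K t).toReal)

/-- An `n`-field function: bounded above on `[0,1]`, never `+∞`, and finite at more than `n`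
points of `[0,1]`, counting the endpoints `0`, `1` with weight `1/2` only. -/
def NFieldFun (n : ℕ) (J : ℝ → EReal) : Prop :=
  (∀ t, J t ≠ ⊤) ∧
  (∃ M : ℝ, ∀ t ∈ Icc (0:ℝ) 1, J t ≤ (M : EReal)) ∧
  ((∃ S : Finset ℝ, ↑S ⊆ {t ∈ Ioo (0:ℝ) 1 | J t ≠ ⊥} ∧ n + 1 ≤ S.card) ∨
   ((∃ S : Finset ℝ, ↑S ⊆ {t ∈ Ioo (0:ℝ) 1 | J t ≠ ⊥} ∧ n ≤ S.card) ∧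
     (J 0 ≠ ⊥ ∨ J 1 ≠ ⊥)))

/-- The closed simplex: `0 ≤ x₁ ≤ ⋯ ≤ xₙ ≤ 1`. -/
def closedSimplex (n : ℕ) (x : Fin n → ℝ) : Prop :=
  (∀ i, x i ∈ Icc (0:ℝ) 1) ∧ Monotone x

/-- The open simplex: `0 < x₁ < ⋯ < xₙ < 1`. -/
def openSimplex (n : ℕ) (x : Fin n → ℝ) : Prop :=
  (∀ i, x i ∈ Ioo (0:ℝ) 1) ∧ StrictMono x

/-- Extended node system: `x₀ = 0`, `x₁,…,xₙ`, `x_{n+1} = 1`. -/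
def extNodes (n : ℕ) (x : Fin n → ℝ) : Fin (n + 2) → ℝ :=
  Fin.cons 0 (Fin.snoc x 1)

/-- The (weighted) sum of translates function `F(x,t) = J(t) + ∑ νⱼ K(t - xⱼ)`. -/
def sumTrans (n : ℕ) (ν : Fin n → ℝ) (K J : ℝ → EReal) (x : Fin n → ℝ) (t : ℝ) : EReal :=
  J t + ∑ i, (ν i : EReal) * K (t - x i)

/-- The `j`-th interval maximum `mⱼ(x) = sup_{[xⱼ, xⱼ₊₁]} F(x,·)`. -/
def intMax (n : ℕ) (ν : Fin n → ℝ) (K J : ℝ → EReal) (x : Fin n → ℝ) (j : Fin (n + 1)) :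
    EReal :=
  sSup (sumTrans n ν K J x '' Icc (extNodes n x j.castSucc) (extNodes n x j.succ))

/-- A node system is regular (nonsingular) if all interval maxima are finite. -/
def regularNodes (n : ℕ) (ν : Fin n → ℝ) (K J : ℝ → EReal) (x : Fin n → ℝ) : Prop :=
  ∀ j, intMax n ν K J x j ≠ ⊥


namespace EquiAux

open Set Filter Topology

variable {n : ℕ} {x : Fin n → ℝ}

lemma extNodes_zero : extNodes n x 0 = 0 := rfl

lemma extNodes_succ (k : Fin (n+1)) :
    extNodes n x k.succ = (Fin.snoc x (1:ℝ) : Fin (n+1) → ℝ) k := by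
  simp only [extNodes, Fin.cons_succ]

lemma extNodes_last : extNodes n x (Fin.last (n+1)) = 1 := by
  rw [← Fin.succ_last, extNodes_succ, Fin.snoc_last]

lemma extNodes_node (i : Fin n) : extNodes n x i.castSucc.succ = x i := by
  rw [extNodes_succ, Fin.snoc_castSucc]

lemma snoc_mem (hx : closedSimplex n x) (k : Fin (n+1)) :
    (Fin.snoc x (1:ℝ) : Fin (n+1) → ℝ) k ∈ Icc (0:ℝ) 1 := by
  induction k using Fin.lastCases with
  | last => rw [Fin.snoc_last]; exact ⟨zero_le_one, le_refl 1⟩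
  | cast i => rw [Fin.snoc_castSucc]; exact hx.1 i

lemma snoc_mono (hx : closedSimplex n x) : Monotone (Fin.snoc x (1:ℝ) : Fin (n+1) → ℝ) := by
  intro a b hab
  induction b using Fin.lastCases with
  | last => rw [Fin.snoc_last]; exact (snoc_mem hx a).2
  | cast i =>
      induction a using Fin.lastCases with
      | last => exact absurd hab (not_le.mpr (Fin.castSucc_lt_last i))
      | cast j =>
          rw [Fin.snoc_castSucc, Fin.snoc_castSucc]
          exact hx.2 (Fin.castSucc_le_castSucc_iff.mp hab)

lemma extNodes_mem (hx : closedSimplex n x) (k : Fin (n+2)) :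
    extNodes n x k ∈ Icc (0:ℝ) 1 := by
  induction k using Fin.cases with
  | zero => rw [extNodes_zero]; exact ⟨le_refl 0, zero_le_one⟩
  | succ j => rw [extNodes_succ]; exact snoc_mem hx j

lemma extNodes_mono (hx : closedSimplex n x) : Monotone (extNodes n x) := by
  intro a b hab
  induction a using Fin.cases with
  | zero => rw [extNodes_zero]; exact (extNodes_mem hx b).1
  | succ j =>
      induction b using Fin.cases with
      | zero => exact absurd hab (not_le.mpr (Fin.succ_pos j))
      | succ i =>
          rw [extNodes_succ, extNodes_succ]
          exact snoc_mono hx (Fin.succ_le_succ_iff.mp hab)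

lemma node_le_ext (hx : closedSimplex n x) (i : Fin n) (k : Fin (n+2))
    (h : (i:ℕ)+1 ≤ (k:ℕ)) : x i ≤ extNodes n x k := by
  rw [← extNodes_node (x := x) i]
  exact extNodes_mono hx (by rwa [Fin.le_def, Fin.val_succ, Fin.coe_castSucc])

lemma ext_le_node (hx : closedSimplex n x) (i : Fin n) (k : Fin (n+2))
    (h : (k:ℕ) ≤ (i:ℕ)+1) : extNodes n x k ≤ x i := by
  rw [← extNodes_node (x := x) i]
  exact extNodes_mono hx (by rwa [Fin.le_def, Fin.val_succ, Fin.coe_castSucc])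

/-- every point of `[0,1]` is in some interval of the node system -/
lemma exists_interval (hx : closedSimplex n x) {t : ℝ} (ht : t ∈ Icc (0:ℝ) 1) :
    ∃ j : Fin (n+1), t ∈ Icc (extNodes n x j.castSucc) (extNodes n x j.succ) := by
  classical
  have hne : (Finset.univ.filter (fun k : Fin (n+1) => extNodes n x k.castSucc ≤ t)).Nonempty := by
    refine ⟨0, ?_⟩
    simp only [Finset.mem_filter, Finset.mem_univ, true_and]
    exact le_trans (le_of_eq extNodes_zero) ht.1
  set S := Finset.univ.filter (fun k : Fin (n+1) => extNodes n x k.castSucc ≤ t) with hS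
  obtain ⟨j, hjS, hjmax⟩ := S.exists_max_image id hne
  refine ⟨j, ?_, ?_⟩
  · simpa [hS, Finset.mem_filter] using hjS
  · by_contra hlt
    push_neg at hlt
    rcases Fin.eq_castSucc_or_eq_last j.succ with ⟨k, hk⟩ | hk
    · have hkS : k ∈ S := by
        simp only [hS, Finset.mem_filter, Finset.mem_univ, true_and]
        rw [← hk]; exact hlt.le
      have h1 := hjmax k hkS
      have h2 : (j:ℕ) + 1 = (k:ℕ) := by
        have := congrArg Fin.val hk
        simpa using this
      simp only [id] at h1
      rw [Fin.le_def] at h1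
      omega
    · rw [hk, extNodes_last] at hlt
      exact absurd ht.2 (not_le.mpr hlt)

end EquiAux

namespace EquiAux2
open Set Filter Topology EquiAux

variable {K : ℝ → EReal}

lemma K_anti (hK : KernelFun K) (hSM : KStrictMonotone K) {a b : ℝ}
    (ha : -1 ≤ a) (hab : a ≤ b) (hb : b ≤ 0) : K b ≤ K a := by
  rcases eq_or_lt_of_le hab with rfl | hab
  · exact le_refl _
  rcases eq_or_lt_of_le hb with rfl | hb0
  · -- b = 0
    have hcw : ContinuousWithinAt K (Icc (-1:ℝ) 0) 0 :=
      hK.2.2.2.2.1 0 ⟨by norm_num, le_refl 0⟩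
    have hsub : Ioo a 0 ⊆ Icc (-1:ℝ) 0 := fun t ht => ⟨le_trans ha ht.1.le, ht.2.le⟩
    have hmem : (0:ℝ) ∈ closure (Ioo a 0) := by
      rw [closure_Ioo (ne_of_lt hab)]
      exact ⟨hab.le, le_refl 0⟩
    have hne : (𝓝[Ioo a 0] (0:ℝ)).NeBot := mem_closure_iff_nhdsWithin_neBot.mp hmem
    have ht : Tendsto K (𝓝[Ioo a 0] (0:ℝ)) (𝓝 (K 0)) :=
      hcw.mono_left (nhdsWithin_mono _ hsub)
    refine le_of_tendsto ht ?_
    filter_upwards [self_mem_nhdsWithin] with t ht'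
    exact (hSM.1 ⟨ha, hab⟩ ⟨le_trans ha ht'.1.le, ht'.2⟩ ht'.1).le
  · exact (hSM.1 ⟨ha, lt_of_lt_of_le hab hb0.le⟩ ⟨le_trans ha hab.le, hb0⟩ hab).le

lemma K_mono (hK : KernelFun K) (hSM : KStrictMonotone K) {a b : ℝ}
    (ha : 0 ≤ a) (hab : a ≤ b) (hb : b ≤ 1) : K a ≤ K b := by
  rcases eq_or_lt_of_le hab with rfl | hab
  · exact le_refl _
  rcases eq_or_lt_of_le ha with rfl | ha0
  · -- a = 0
    have hcw : ContinuousWithinAt K (Icc (0:ℝ) 1) 0 :=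
      hK.2.2.2.2.2 0 ⟨le_refl 0, zero_le_one⟩
    have hsub : Ioo 0 b ⊆ Icc (0:ℝ) 1 := fun t ht => ⟨ht.1.le, le_trans ht.2.le hb⟩
    have hmem : (0:ℝ) ∈ closure (Ioo 0 b) := by
      rw [closure_Ioo (ne_of_lt hab)]
      exact ⟨le_refl 0, hab.le⟩
    have hne : (𝓝[Ioo 0 b] (0:ℝ)).NeBot := mem_closure_iff_nhdsWithin_neBot.mp hmem
    have ht : Tendsto K (𝓝[Ioo 0 b] (0:ℝ)) (𝓝 (K 0)) :=
      hcw.mono_left (nhdsWithin_mono _ hsub)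
    refine le_of_tendsto ht ?_
    filter_upwards [self_mem_nhdsWithin] with t ht'
    exact (hSM.2 ⟨ht'.1, le_trans ht'.2.le hb⟩ ⟨hab, hb⟩ ht'.2).le
  · exact (hSM.2 ⟨ha0, le_trans hab.le hb⟩ ⟨lt_trans ha0 hab, hb⟩ hab).le

lemma K_anti_strict (hK : KernelFun K) (hSM : KStrictMonotone K) {a b : ℝ}
    (ha : -1 ≤ a) (hab : a < b) (hb : b ≤ 0) : K b < K a := by
  rcases eq_or_lt_of_le hb with rfl | hb0
  · -- b = 0 : K 0 ≤ K (a/2) < K a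
    have h1 : K 0 ≤ K (a/2) := K_anti hK hSM (by linarith) (by linarith) (by linarith)
    have h2 : K (a/2) < K a := hSM.1 ⟨ha, hab⟩ ⟨by linarith, by linarith⟩ (by linarith)
    exact lt_of_le_of_lt h1 h2
  · exact hSM.1 ⟨ha, lt_of_lt_of_le hab hb0.le⟩ ⟨le_trans ha hab.le, hb0⟩ hab

lemma K_mono_strict (hK : KernelFun K) (hSM : KStrictMonotone K) {a b : ℝ}
    (ha : 0 ≤ a) (hab : a < b) (hb : b ≤ 1) : K a < K b := by
  rcases eq_or_lt_of_le ha with rfl | ha0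
  · have h1 : K 0 ≤ K (b/2) := K_mono hK hSM (by linarith) (by linarith) (by linarith)
    have h2 : K (b/2) < K b := hSM.2 ⟨by linarith, by linarith⟩ ⟨by linarith, hb⟩ (by linarith)
    exact lt_of_le_of_lt h1 h2
  · exact hSM.2 ⟨ha0, le_trans hab.le hb⟩ ⟨lt_trans ha0 hab, hb⟩ hab

lemma K_ne_bot (hK : KernelFun K) (hSM : KStrictMonotone K) {a : ℝ}
    (ha : -1 ≤ a) (ha' : a ≤ 1) (h0 : a ≠ 0) : K a ≠ ⊥ := by
  rcases lt_or_gt_of_ne h0 with hneg | hpos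
  · have h1 : K (a/2) ≤ K a := K_anti hK hSM ha (by linarith) (by linarith)
    have h2 : K (a/2) ≠ ⊥ := hK.2.1 (a/2) (Or.inl ⟨by linarith, by linarith⟩)
    intro h
    rw [h, le_bot_iff] at h1
    exact h2 h1
  · have h1 : K (a/2) ≤ K a := K_mono hK hSM (by linarith) (by linarith) ha'
    have h2 : K (a/2) ≠ ⊥ := hK.2.1 (a/2) (Or.inr ⟨by linarith, by linarith⟩)
    intro h
    rw [h, le_bot_iff] at h1
    exact h2 h1

lemma K_bddAbove (hK : KernelFun K) :
    ∃ MK : ℝ, ∀ a : ℝ, -1 ≤ a → a ≤ 1 → K a ≤ (MK : EReal) := by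
  obtain ⟨a₁, ha₁, h₁⟩ := isCompact_Icc.exists_isMaxOn (s := Icc (-1:ℝ) 0)
    ⟨-1, by norm_num, by norm_num⟩ hK.2.2.2.2.1
  obtain ⟨a₂, ha₂, h₂⟩ := isCompact_Icc.exists_isMaxOn (s := Icc (0:ℝ) 1)
    ⟨0, by norm_num, by norm_num⟩ hK.2.2.2.2.2
  set V := max (K a₁) (K a₂) with hV
  have hVtop : V ≠ ⊤ :=
    (max_lt (lt_top_iff_ne_top.mpr (hK.1 a₁)) (lt_top_iff_ne_top.mpr (hK.1 a₂))).ne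
  refine ⟨V.toReal, fun a ha ha' => ?_⟩
  have hle : K a ≤ V := by
    rcases le_or_gt a 0 with h | h
    · exact le_trans (h₁ ⟨ha, h⟩) (le_max_left _ _)
    · exact le_trans (h₂ ⟨h.le, ha'⟩) (le_max_right _ _)
  exact le_trans hle (EReal.le_coe_toReal hVtop)

end EquiAux2

namespace EquiAux2
open Set Filter Topology EquiAux

lemma concave_incr {s : Set ℝ} {f : ℝ → ℝ} (hf : ConcaveOn ℝ s f) {p q Δ : ℝ}
    (hp : p ∈ s) (hqd : q + Δ ∈ s) (hpq : p ≤ q) (hΔ : 0 ≤ Δ) :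
    f p + f (q + Δ) ≤ f q + f (p + Δ) := by
  rcases eq_or_lt_of_le (by linarith : p ≤ q + Δ) with heq | hT
  · have hq : q = p := by linarith
    have hd : Δ = 0 := by linarith
    rw [hq, hd]
  · set T := q + Δ - p with hTdef
    have hT0 : 0 < T := by simp [hTdef]; linarith
    set α := Δ / T with hα
    have hα0 : 0 ≤ α := div_nonneg hΔ hT0.le
    have hα1 : 0 ≤ 1 - α := by
      have : α ≤ 1 := by
        rw [hα, div_le_one hT0]; simp [hTdef]; linarith
      linarith
    have hαT : α * T = Δ := by rw [hα]; exact div_mul_cancel₀ Δ hT0.ne'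
    have e1 : α • p + (1 - α) • (q + Δ) = q := by
      simp only [smul_eq_mul]
      linear_combination (-1:ℝ) * hαT + α * hTdef
    have e2 : (1 - α) • p + α • (q + Δ) = p + Δ := by
      simp only [smul_eq_mul]
      linear_combination hαT - α * hTdef
    have h1 := hf.2 hp hqd hα0 hα1 (by ring)
    have h2 := hf.2 hp hqd hα1 hα0 (by ring)
    rw [e1] at h1
    rw [e2] at h2
    simp only [smul_eq_mul] at h1 h2
    nlinarith [h1, h2]

variable {K : ℝ → EReal}

lemma concave_shift_left (hK : KernelFun K) {p q Δ : ℝ}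
    (hp : -1 ≤ p) (hpq : p ≤ q) (hΔ : 0 ≤ Δ) (hqd : q + Δ ≤ 0) :
    K p + K (q + Δ) ≤ K q + K (p + Δ) := by
  set l := 𝓝[Ioo (0:ℝ) (1/2)] (0:ℝ) with hl
  have hlne : l.NeBot := by
    apply mem_closure_iff_nhdsWithin_neBot.mp
    rw [closure_Ioo (by norm_num : (0:ℝ) ≠ 1/2)]
    constructor <;> norm_num
  have hmem : ∀ t : ℝ, -1 ≤ t → t ≤ 0 → ∀ θ : ℝ, θ ∈ Ioo (0:ℝ) (1/2) →
      (1-θ)*t - θ/2 ∈ Ioo (-1:ℝ) 0 := by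
    intro t ht1 ht2 θ hθ
    constructor <;> nlinarith [hθ.1, hθ.2]
  have hfin : ∀ u : ℝ, u ∈ Ioo (-1:ℝ) 0 → K u = (((K u).toReal : ℝ) : EReal) :=
    fun u hu => (EReal.coe_toReal (hK.1 u) (hK.2.1 u (Or.inl hu))).symm
  -- the four original points are in Icc (-1) 0
  have hpI : p ∈ Icc (-1:ℝ) 0 := ⟨hp, by linarith⟩
  have hqI : q ∈ Icc (-1:ℝ) 0 := ⟨by linarith, by linarith⟩
  have hpdI : p + Δ ∈ Icc (-1:ℝ) 0 := ⟨by linarith, by linarith⟩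
  have hqdI : q + Δ ∈ Icc (-1:ℝ) 0 := ⟨by linarith, hqd⟩
  -- tendsto of mapped points
  have hT : ∀ t : ℝ, t ∈ Icc (-1:ℝ) 0 →
      Tendsto (fun θ : ℝ => K ((1-θ)*t - θ/2)) l (𝓝 (K t)) := by
    intro t ht
    have h1 : Tendsto (fun θ : ℝ => (1-θ)*t - θ/2) l (𝓝 t) := by
      have hc : Continuous (fun θ : ℝ => (1-θ)*t - θ/2) := by continuity
      have := hc.tendsto 0
      have h0 : (1-(0:ℝ))*t - 0/2 = t := by ring
      rw [h0] at this
      exact this.mono_left nhdsWithin_le_nhds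
    have h2 : Tendsto (fun θ : ℝ => (1-θ)*t - θ/2) l (𝓝[Icc (-1:ℝ) 0] t) := by
      rw [tendsto_nhdsWithin_iff]
      refine ⟨h1, ?_⟩
      filter_upwards [self_mem_nhdsWithin] with θ hθ
      exact Ioo_subset_Icc_self (hmem t ht.1 ht.2 θ hθ)
    exact (hK.2.2.2.2.1 t ht).tendsto.comp h2
  -- the interior inequality
  have hineq : ∀ᶠ θ in l, K ((1-θ)*p - θ/2) + K ((1-θ)*(q+Δ) - θ/2)
      ≤ K ((1-θ)*q - θ/2) + K ((1-θ)*(p+Δ) - θ/2) := by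
    filter_upwards [self_mem_nhdsWithin] with θ hθ
    have hp'' := hmem p hpI.1 hpI.2 θ hθ
    have hq'' := hmem q hqI.1 hqI.2 θ hθ
    have hpd'' := hmem (p+Δ) hpdI.1 hpdI.2 θ hθ
    have hqd'' := hmem (q+Δ) hqdI.1 hqdI.2 θ hθ
    have e2 : (1-θ)*(q+Δ) - θ/2 = ((1-θ)*q - θ/2) + (1-θ)*Δ := by ring
    have e3 : (1-θ)*(p+Δ) - θ/2 = ((1-θ)*p - θ/2) + (1-θ)*Δ := by ring
    have hΔ' : (0:ℝ) ≤ (1-θ)*Δ := by nlinarith [hθ.1, hθ.2]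
    have hpq' : (1-θ)*p - θ/2 ≤ (1-θ)*q - θ/2 := by nlinarith [hθ.1, hθ.2]
    have hmain := concave_incr (f := fun u => (K u).toReal) hK.2.2.1
      (p := (1-θ)*p - θ/2) (q := (1-θ)*q - θ/2) (Δ := (1-θ)*Δ)
      hp'' (by rw [← e2]; exact hqd'') hpq' hΔ'
    rw [← e2, ← e3] at hmain
    rw [hfin _ hp'', hfin _ hqd'', hfin _ hq'', hfin _ hpd'',
      ← EReal.coe_add, ← EReal.coe_add, EReal.coe_le_coe_iff]
    exact hmain
  -- pass to the limit
  have hTL : Tendsto (fun θ : ℝ => K ((1-θ)*p - θ/2) + K ((1-θ)*(q+Δ) - θ/2)) l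
      (𝓝 (K p + K (q+Δ))) := by
    have hadd : ContinuousAt (fun r : EReal × EReal => r.1 + r.2) (K p, K (q+Δ)) :=
      EReal.continuousAt_add (Or.inl (hK.1 p)) (Or.inr (hK.1 (q+Δ)))
    exact hadd.tendsto.comp ((hT p hpI).prodMk_nhds (hT (q+Δ) hqdI))
  have hTR : Tendsto (fun θ : ℝ => K ((1-θ)*q - θ/2) + K ((1-θ)*(p+Δ) - θ/2)) l
      (𝓝 (K q + K (p+Δ))) := by
    have hadd : ContinuousAt (fun r : EReal × EReal => r.1 + r.2) (K q, K (p+Δ)) :=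
      EReal.continuousAt_add (Or.inl (hK.1 q)) (Or.inr (hK.1 (p+Δ)))
    exact hadd.tendsto.comp ((hT q hqI).prodMk_nhds (hT (p+Δ) hpdI))
  exact le_of_tendsto_of_tendsto hTL hTR hineq

lemma concave_shift_right (hK : KernelFun K) {p q Δ : ℝ}
    (hp : 0 ≤ p) (hpq : p ≤ q) (hΔ : 0 ≤ Δ) (hqd : q + Δ ≤ 1) :
    K p + K (q + Δ) ≤ K q + K (p + Δ) := by
  set l := 𝓝[Ioo (0:ℝ) (1/2)] (0:ℝ) with hl
  have hlne : l.NeBot := by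
    apply mem_closure_iff_nhdsWithin_neBot.mp
    rw [closure_Ioo (by norm_num : (0:ℝ) ≠ 1/2)]
    constructor <;> norm_num
  have hmem : ∀ t : ℝ, 0 ≤ t → t ≤ 1 → ∀ θ : ℝ, θ ∈ Ioo (0:ℝ) (1/2) →
      (1-θ)*t + θ/2 ∈ Ioo (0:ℝ) 1 := by
    intro t ht1 ht2 θ hθ
    constructor <;> nlinarith [hθ.1, hθ.2]
  have hfin : ∀ u : ℝ, u ∈ Ioo (0:ℝ) 1 → K u = (((K u).toReal : ℝ) : EReal) :=
    fun u hu => (EReal.coe_toReal (hK.1 u) (hK.2.1 u (Or.inr hu))).symm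
  have hpI : p ∈ Icc (0:ℝ) 1 := ⟨hp, by linarith⟩
  have hqI : q ∈ Icc (0:ℝ) 1 := ⟨by linarith, by linarith⟩
  have hpdI : p + Δ ∈ Icc (0:ℝ) 1 := ⟨by linarith, by linarith⟩
  have hqdI : q + Δ ∈ Icc (0:ℝ) 1 := ⟨by linarith, hqd⟩
  have hT : ∀ t : ℝ, t ∈ Icc (0:ℝ) 1 →
      Tendsto (fun θ : ℝ => K ((1-θ)*t + θ/2)) l (𝓝 (K t)) := by
    intro t ht
    have h1 : Tendsto (fun θ : ℝ => (1-θ)*t + θ/2) l (𝓝 t) := by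
      have hc : Continuous (fun θ : ℝ => (1-θ)*t + θ/2) := by continuity
      have := hc.tendsto 0
      have h0 : (1-(0:ℝ))*t + 0/2 = t := by ring
      rw [h0] at this
      exact this.mono_left nhdsWithin_le_nhds
    have h2 : Tendsto (fun θ : ℝ => (1-θ)*t + θ/2) l (𝓝[Icc (0:ℝ) 1] t) := by
      rw [tendsto_nhdsWithin_iff]
      refine ⟨h1, ?_⟩
      filter_upwards [self_mem_nhdsWithin] with θ hθ
      exact Ioo_subset_Icc_self (hmem t ht.1 ht.2 θ hθ)
    exact (hK.2.2.2.2.2 t ht).tendsto.comp h2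
  have hineq : ∀ᶠ θ in l, K ((1-θ)*p + θ/2) + K ((1-θ)*(q+Δ) + θ/2)
      ≤ K ((1-θ)*q + θ/2) + K ((1-θ)*(p+Δ) + θ/2) := by
    filter_upwards [self_mem_nhdsWithin] with θ hθ
    have hp'' := hmem p hpI.1 hpI.2 θ hθ
    have hq'' := hmem q hqI.1 hqI.2 θ hθ
    have hpd'' := hmem (p+Δ) hpdI.1 hpdI.2 θ hθ
    have hqd'' := hmem (q+Δ) hqdI.1 hqdI.2 θ hθ
    have e2 : (1-θ)*(q+Δ) + θ/2 = ((1-θ)*q + θ/2) + (1-θ)*Δ := by ring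
    have e3 : (1-θ)*(p+Δ) + θ/2 = ((1-θ)*p + θ/2) + (1-θ)*Δ := by ring
    have hΔ' : (0:ℝ) ≤ (1-θ)*Δ := by nlinarith [hθ.1, hθ.2]
    have hpq' : (1-θ)*p + θ/2 ≤ (1-θ)*q + θ/2 := by nlinarith [hθ.1, hθ.2]
    have hmain := concave_incr (f := fun u => (K u).toReal) hK.2.2.2.1
      (p := (1-θ)*p + θ/2) (q := (1-θ)*q + θ/2) (Δ := (1-θ)*Δ)
      hp'' (by rw [← e2]; exact hqd'') hpq' hΔ'
    rw [← e2, ← e3] at hmain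
    rw [hfin _ hp'', hfin _ hqd'', hfin _ hq'', hfin _ hpd'',
      ← EReal.coe_add, ← EReal.coe_add, EReal.coe_le_coe_iff]
    exact hmain
  have hTL : Tendsto (fun θ : ℝ => K ((1-θ)*p + θ/2) + K ((1-θ)*(q+Δ) + θ/2)) l
      (𝓝 (K p + K (q+Δ))) := by
    have hadd : ContinuousAt (fun r : EReal × EReal => r.1 + r.2) (K p, K (q+Δ)) :=
      EReal.continuousAt_add (Or.inl (hK.1 p)) (Or.inr (hK.1 (q+Δ)))
    exact hadd.tendsto.comp ((hT p hpI).prodMk_nhds (hT (q+Δ) hqdI))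
  have hTR : Tendsto (fun θ : ℝ => K ((1-θ)*q + θ/2) + K ((1-θ)*(p+Δ) + θ/2)) l
      (𝓝 (K q + K (p+Δ))) := by
    have hadd : ContinuousAt (fun r : EReal × EReal => r.1 + r.2) (K q, K (p+Δ)) :=
      EReal.continuousAt_add (Or.inl (hK.1 q)) (Or.inr (hK.1 (p+Δ)))
    exact hadd.tendsto.comp ((hT q hqI).prodMk_nhds (hT (p+Δ) hpdI))
  exact le_of_tendsto_of_tendsto hTL hTR hineq

end EquiAux2

namespace EquiAux2
open Set Filter Topology EquiAux

variable {K : ℝ → EReal}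

lemma coe_mul_ne_top {r : ℝ} (hr : 0 < r) {a : EReal} (ha : a ≠ ⊤) : (r:EReal) * a ≠ ⊤ := by
  induction a with
  | bot => rw [EReal.coe_mul_bot_of_pos hr]; exact bot_ne_top
  | coe y => rw [← EReal.coe_mul]; exact EReal.coe_ne_top _
  | top => exact absurd rfl ha

lemma coe_mul_ne_bot {r : ℝ} (hr : 0 < r) {a : EReal} (ha : a ≠ ⊥) : (r:EReal) * a ≠ ⊥ := by
  induction a with
  | bot => exact absurd rfl ha
  | coe y => rw [← EReal.coe_mul]; exact EReal.coe_ne_bot _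
  | top => rw [EReal.coe_mul_top_of_pos hr]; exact top_ne_bot

lemma coe_mul_le_coe {r m : ℝ} (hr : 0 < r) {a : EReal} (ha : a ≤ (m:EReal)) :
    (r:EReal) * a ≤ ((r*m : ℝ) : EReal) := by
  induction a with
  | bot => rw [EReal.coe_mul_bot_of_pos hr]; exact bot_le
  | coe y =>
      rw [← EReal.coe_mul, EReal.coe_le_coe_iff]
      exact mul_le_mul_of_nonneg_left (EReal.coe_le_coe_iff.mp ha) hr.le
  | top => exact absurd ha (by simp)

lemma ereal_coe_sum {ι : Type*} (s : Finset ι) (f : ι → ℝ) :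
    ((∑ i ∈ s, f i : ℝ) : EReal) = ∑ i ∈ s, ((f i : ℝ) : EReal) := by
  classical
  induction s using Finset.cons_induction with
  | empty => simp
  | cons a s ha ih => rw [Finset.sum_cons, Finset.sum_cons, EReal.coe_add, ih]

lemma ereal_sum_ne_top {ι : Type*} (s : Finset ι) (f : ι → EReal)
    (h : ∀ i ∈ s, f i ≠ ⊤) : ∑ i ∈ s, f i ≠ ⊤ := by
  classical
  induction s using Finset.cons_induction with
  | empty => simp
  | cons a s ha ih =>
      rw [Finset.sum_cons]
      exact (EReal.add_lt_top (h a (Finset.mem_cons_self a s))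
        (ih fun i hi => h i (Finset.mem_cons_of_mem hi))).ne

lemma ereal_sum_eq_bot {ι : Type*} (s : Finset ι) (f : ι → EReal) {i : ι}
    (hi : i ∈ s) (h : f i = ⊥) : ∑ j ∈ s, f j = ⊥ := by
  classical
  rw [← Finset.sum_erase_add s f hi, h, EReal.add_bot]

lemma ereal_sum_toReal {ι : Type*} (s : Finset ι) (f : ι → EReal)
    (htop : ∀ i ∈ s, f i ≠ ⊤) (hbot : ∀ i ∈ s, f i ≠ ⊥) :
    ∑ i ∈ s, f i = ((∑ i ∈ s, (f i).toReal : ℝ) : EReal) := by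
  rw [ereal_coe_sum]
  exact Finset.sum_congr rfl fun i hi => (EReal.coe_toReal (htop i hi) (hbot i hi)).symm

section SumTransBasic

variable {n : ℕ} {ν : Fin n → ℝ} {J : ℝ → EReal} {x : Fin n → ℝ} {t : ℝ}

lemma sumTrans_terms_ne_bot (hν : ∀ i, 0 < ν i) (hKtop : ∀ u, K u ≠ ⊤)
    (h : sumTrans n ν K J x t ≠ ⊥) : J t ≠ ⊥ ∧ ∀ i, K (t - x i) ≠ ⊥ := by
  constructor
  · intro hJ
    exact h (by rw [sumTrans, hJ, EReal.bot_add])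
  · intro i hKb
    apply h
    rw [sumTrans, ereal_sum_eq_bot Finset.univ _ (Finset.mem_univ i)
      (by rw [hKb, EReal.coe_mul_bot_of_pos (hν i)]), EReal.add_bot]

lemma sumTrans_toReal (hν : ∀ i, 0 < ν i) (hKtop : ∀ u, K u ≠ ⊤) (hJtop : ∀ u, J u ≠ ⊤)
    (hJb : J t ≠ ⊥) (hKb : ∀ i, K (t - x i) ≠ ⊥) :
    sumTrans n ν K J x t
      = (((J t).toReal + ∑ i, ν i * (K (t - x i)).toReal : ℝ) : EReal) := by
  rw [sumTrans, EReal.coe_add, ereal_coe_sum]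
  congr 1
  · exact (EReal.coe_toReal (hJtop t) hJb).symm
  · refine Finset.sum_congr rfl fun i _ => ?_
    rw [← EReal.coe_toReal (hKtop (t - x i)) (hKb i), ← EReal.coe_mul, EReal.toReal_coe]

lemma sumTrans_ne_bot_iff (hν : ∀ i, 0 < ν i) (hKtop : ∀ u, K u ≠ ⊤) (hJtop : ∀ u, J u ≠ ⊤)
    (hJb : J t ≠ ⊥) (hKb : ∀ i, K (t - x i) ≠ ⊥) : sumTrans n ν K J x t ≠ ⊥ := by
  rw [sumTrans_toReal hν hKtop hJtop hJb hKb]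
  exact EReal.coe_ne_bot _

end SumTransBasic

lemma contOn_union_closed {f : ℝ → EReal} {s t : Set ℝ} (hs : IsClosed s) (ht : IsClosed t)
    (hfs : ContinuousOn f s) (hft : ContinuousOn f t) : ContinuousOn f (s ∪ t) := by
  intro u _
  have hcs : ContinuousWithinAt f s u := by
    by_cases h : u ∈ s
    · exact hfs u h
    · exact continuousWithinAt_of_notMem_closure (by rwa [hs.closure_eq])
  have hct : ContinuousWithinAt f t u := by
    by_cases h : u ∈ t
    · exact hft u h
    · exact continuousWithinAt_of_notMem_closure (by rwa [ht.closure_eq])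
  exact hcs.union hct

lemma contOn_shift (hK : KernelFun K) {a : ℝ} (ha : 0 ≤ a) (ha1 : a ≤ 1) :
    ContinuousOn (fun t => K (t - a)) (Icc (0:ℝ) 1) := by
  have h1 : ContinuousOn (fun t => K (t - a)) (Icc 0 a) := by
    refine ContinuousOn.comp hK.2.2.2.2.1 ((continuous_id.sub continuous_const).continuousOn) ?_
    intro u hu
    exact ⟨by simp only [id]; linarith [hu.1], by simp only [id]; linarith [hu.2]⟩
  have h2 : ContinuousOn (fun t => K (t - a)) (Icc a 1) := by
    refine ContinuousOn.comp hK.2.2.2.2.2 ((continuous_id.sub continuous_const).continuousOn) ?_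
    intro u hu
    exact ⟨by simp only [id]; linarith [hu.1], by simp only [id]; linarith [hu.2]⟩
  rw [← Icc_union_Icc_eq_Icc ha ha1]
  exact contOn_union_closed isClosed_Icc isClosed_Icc h1 h2

lemma contOn_term (hK : KernelFun K) {r : ℝ} (hr : 0 < r) {a : ℝ} (ha : 0 ≤ a) (ha1 : a ≤ 1) :
    ContinuousOn (fun t => (r : EReal) * K (t - a)) (Icc (0:ℝ) 1) := by
  intro u hu
  have h1 : ContinuousWithinAt (fun t => K (t - a)) (Icc 0 1) u := contOn_shift hK ha ha1 u hu
  have hr0 : (r : EReal) ≠ 0 := by exact_mod_cast hr.ne'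
  have hmul : ContinuousAt (fun p : EReal × EReal => p.1 * p.2) ((r:EReal), K (u - a)) :=
    EReal.continuousAt_mul (Or.inl hr0) (Or.inl hr0)
      (Or.inl (EReal.coe_ne_bot _)) (Or.inl (EReal.coe_ne_top _))
  have hpair : ContinuousWithinAt (fun t : ℝ => (((r:EReal)), K (t - a))) (Icc (0:ℝ) 1) u :=
    ContinuousWithinAt.prodMk continuousWithinAt_const h1
  have : Tendsto (fun t : ℝ => (r:EReal) * K (t - a)) (𝓝[Icc (0:ℝ) 1] u)
      (𝓝 ((r:EReal) * K (u - a))) := hmul.tendsto.comp hpair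
  exact this

lemma contOn_sumKernel {n : ℕ} {ν : Fin n → ℝ} {x : Fin n → ℝ}
    (hK : KernelFun K) (hν : ∀ i, 0 < ν i) (hx : closedSimplex n x) :
    ContinuousOn (fun t => ∑ i, (ν i : EReal) * K (t - x i)) (Icc (0:ℝ) 1) := by
  classical
  have main : ∀ s : Finset (Fin n),
      ContinuousOn (fun t => ∑ i ∈ s, (ν i : EReal) * K (t - x i)) (Icc (0:ℝ) 1) := by
    intro s
    induction s using Finset.cons_induction with
    | empty => simpa using continuousOn_const
    | cons a s ha ih =>
        intro u hu
        have h1 : ContinuousWithinAt (fun t => (ν a : EReal) * K (t - x a)) (Icc 0 1) u :=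
          contOn_term hK (hν a) (hx.1 a).1 (hx.1 a).2 u hu
        have h2 : ContinuousWithinAt (fun t => ∑ i ∈ s, (ν i : EReal) * K (t - x i))
            (Icc 0 1) u := ih u hu
        have hane : (ν a : EReal) * K (u - x a) ≠ ⊤ := coe_mul_ne_top (hν a) (hK.1 _)
        have hsne : (∑ i ∈ s, (ν i : EReal) * K (u - x i)) ≠ ⊤ :=
          ereal_sum_ne_top _ _ fun i _ => coe_mul_ne_top (hν i) (hK.1 _)
        have hadd : ContinuousAt (fun p : EReal × EReal => p.1 + p.2)
            ((ν a : EReal) * K (u - x a), ∑ i ∈ s, (ν i : EReal) * K (u - x i)) :=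
          EReal.continuousAt_add (Or.inl hane) (Or.inr hsne)
        have hpair : ContinuousWithinAt
            (fun t : ℝ => ((ν a : EReal) * K (t - x a), ∑ i ∈ s, (ν i : EReal) * K (t - x i)))
            (Icc (0:ℝ) 1) u := ContinuousWithinAt.prodMk h1 h2
        have hsum : Tendsto
            (fun t : ℝ => (ν a : EReal) * K (t - x a) + ∑ i ∈ s, (ν i : EReal) * K (t - x i))
            (𝓝[Icc (0:ℝ) 1] u)
            (𝓝 ((ν a : EReal) * K (u - x a) + ∑ i ∈ s, (ν i : EReal) * K (u - x i))) :=
          hadd.tendsto.comp hpair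
        refine ContinuousWithinAt.congr hsum (fun y _ => ?_) ?_ <;>
          rw [Finset.sum_cons]
  exact main Finset.univ

/-- a point strictly above a sum can be split -/
lemma exists_add_lt {a b y : EReal} (ha : a ≠ ⊤) (hb : b ≠ ⊤) (h : a + b < y) :
    ∃ u v : EReal, a < u ∧ b < v ∧ u + v ≤ y := by
  by_cases hy : y = ⊤
  · exact ⟨⊤, ⊤, lt_top_iff_ne_top.mpr ha, lt_top_iff_ne_top.mpr hb, by rw [hy]; exact le_top⟩
  have hyr : ∃ r : ℝ, y = (r : EReal) := by
    induction y with
    | bot => exact absurd h (by simp)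
    | coe r => exact ⟨r, rfl⟩
    | top => exact absurd rfl hy
  obtain ⟨r, rfl⟩ := hyr
  by_cases hbb : b = ⊥
  · obtain ⟨u, hu, _⟩ := EReal.exists_between_coe_real (lt_top_iff_ne_top.mpr ha)
    refine ⟨u, ((r - u : ℝ) : EReal), hu, by rw [hbb]; exact bot_lt_iff_ne_bot.mpr (EReal.coe_ne_bot _), ?_⟩
    rw [← EReal.coe_add]
    norm_num
  by_cases haa : a = ⊥
  · obtain ⟨v, hv, _⟩ := EReal.exists_between_coe_real (lt_top_iff_ne_top.mpr hb)
    refine ⟨((r - v : ℝ) : EReal), v, by rw [haa]; exact bot_lt_iff_ne_bot.mpr (EReal.coe_ne_bot _), hv, ?_⟩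
    rw [← EReal.coe_add]
    norm_num
  -- both real
  obtain ⟨ar, rfl⟩ : ∃ s : ℝ, a = (s : EReal) := by
    induction a with
    | bot => exact absurd rfl haa
    | coe s => exact ⟨s, rfl⟩
    | top => exact absurd rfl ha
  obtain ⟨br, rfl⟩ : ∃ s : ℝ, b = (s : EReal) := by
    induction b with
    | bot => exact absurd rfl hbb
    | coe s => exact ⟨s, rfl⟩
    | top => exact absurd rfl hb
  rw [← EReal.coe_add, EReal.coe_lt_coe_iff] at h
  refine ⟨((ar + (r - ar - br)/2 : ℝ) : EReal), ((br + (r - ar - br)/2 : ℝ) : EReal), ?_, ?_, ?_⟩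
  · rw [EReal.coe_lt_coe_iff]; linarith
  · rw [EReal.coe_lt_coe_iff]; linarith
  · rw [← EReal.coe_add, EReal.coe_le_coe_iff]; linarith

lemma usc_add_cont {f g : ℝ → EReal} {U : Set ℝ}
    (hf : UpperSemicontinuousOn f U) (hg : ContinuousOn g U)
    (hft : ∀ t ∈ U, f t ≠ ⊤) (hgt : ∀ t ∈ U, g t ≠ ⊤) :
    UpperSemicontinuousOn (fun t => f t + g t) U := by
  intro t ht y hy
  obtain ⟨u, v, hu, hv, huv⟩ := exists_add_lt (hft t ht) (hgt t ht) hy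
  have h1 : ∀ᶠ s in 𝓝[U] t, f s < u := hf t ht u hu
  have h2 : ∀ᶠ s in 𝓝[U] t, g s < v := (hg t ht).tendsto.eventually_lt_const hv
  filter_upwards [h1, h2] with s hs1 hs2
  exact lt_of_lt_of_le (EReal.add_lt_add hs1 hs2) huv

/-- an upper semicontinuous `EReal`-valued function attains its supremum on a
nonempty compact set -/
lemma usc_max {f : ℝ → EReal} {s : Set ℝ} (hcomp : IsCompact s) (hne : s.Nonempty)
    (husc : UpperSemicontinuousOn f s) : ∃ t ∈ s, ∀ u ∈ s, f u ≤ f t := by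
  classical
  set S := sSup (f '' s) with hS
  by_cases hex : ∃ t ∈ s, S ≤ f t
  · obtain ⟨t, ht, hle⟩ := hex
    exact ⟨t, ht, fun u hu => le_trans (le_sSup (Set.mem_image_of_mem f hu)) hle⟩
  push_neg at hex
  exfalso
  have hSbot : ⊥ < S := by
    obtain ⟨t0, ht0⟩ := hne
    exact lt_of_le_of_lt bot_le (hex t0 ht0)
  -- choose intermediate values
  have hchoice : ∀ t (ht : t ∈ s), ∃ a : EReal, f t < a ∧ a < S := fun t ht =>
    exists_between (hex t ht)
  choose a hfa haS using hchoice
  have hVmem : ∀ t (ht : t ∈ s), {u | u ∈ s → f u < a t ht} ∈ 𝓝 t := by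
    intro t ht
    have := husc t ht (a t ht) (hfa t ht)
    rw [eventually_nhdsWithin_iff] at this
    exact this
  obtain ⟨T, hT⟩ := hcomp.elim_nhds_subcover'
    (fun t ht => {u | u ∈ s → f u < a t ht}) hVmem
  have hTne : T.Nonempty := by
    obtain ⟨t0, ht0⟩ := hne
    obtain ⟨z, hz, -⟩ := mem_iUnion₂.mp (hT ht0)
    exact ⟨z, hz⟩
  set A := T.sup' hTne (fun z => a z.1 z.2) with hA
  have hAS : A < S := by
    rw [hA, Finset.sup'_lt_iff]
    exact fun z _ => haS z.1 z.2
  have hSA : S ≤ A := by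
    apply sSup_le
    rintro v ⟨u, hu, rfl⟩
    obtain ⟨z, hz, huz⟩ := mem_iUnion₂.mp (hT hu)
    exact le_trans (huz hu).le (Finset.le_sup' (f := fun z => a z.1 z.2) hz)
  exact absurd hSA (not_le.mpr hAS)

end EquiAux2

namespace EquiAux2
open Set Filter Topology EquiAux

section Package

variable {n : ℕ} {ν : Fin n → ℝ} {K J : ℝ → EReal} {x : Fin n → ℝ}

lemma usc_F (hK : KernelFun K) (hν : ∀ i, 0 < ν i) (hJ : NFieldFun n J)
    (hJusc : UpperSemicontinuousOn J (Icc (0:ℝ) 1)) (hx : closedSimplex n x) :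
    UpperSemicontinuousOn (sumTrans n ν K J x) (Icc (0:ℝ) 1) := by
  have h := usc_add_cont hJusc (contOn_sumKernel hK hν hx) (fun t _ => hJ.1 t)
    (fun t _ => ereal_sum_ne_top _ _ fun i _ => coe_mul_ne_top (hν i) (hK.1 _))
  exact h

lemma F_bound (hK : KernelFun K) (hν : ∀ i, 0 < ν i) (hJ : NFieldFun n J)
    (hx : closedSimplex n x) :
    ∃ B : ℝ, ∀ t ∈ Icc (0:ℝ) 1, sumTrans n ν K J x t ≤ (B : EReal) := by
  obtain ⟨M, hM⟩ := hJ.2.1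
  obtain ⟨MK, hMK⟩ := K_bddAbove hK
  refine ⟨M + ∑ i, ν i * MK, fun t ht => ?_⟩
  rw [sumTrans, EReal.coe_add]
  apply add_le_add (hM t ht)
  rw [ereal_coe_sum]
  apply Finset.sum_le_sum
  intro i _
  apply coe_mul_le_coe (hν i)
  exact hMK _ (by linarith [ht.1, (hx.1 i).2]) (by linarith [ht.2, (hx.1 i).1])

lemma interval_nonempty (hx : closedSimplex n x) (j : Fin (n+1)) :
    extNodes n x j.castSucc ≤ extNodes n x j.succ :=
  extNodes_mono hx (Fin.castSucc_lt_succ : j.castSucc < j.succ).le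

lemma interval_subset (hx : closedSimplex n x) (j : Fin (n+1)) :
    Icc (extNodes n x j.castSucc) (extNodes n x j.succ) ⊆ Icc (0:ℝ) 1 :=
  Icc_subset_Icc (extNodes_mem hx _).1 (extNodes_mem hx _).2

lemma equi_le (hx : closedSimplex n x) {c : EReal}
    (hc : ∀ j, intMax n ν K J x j = c) :
    ∀ t ∈ Icc (0:ℝ) 1, sumTrans n ν K J x t ≤ c := by
  intro t ht
  obtain ⟨j, hj⟩ := exists_interval hx ht
  rw [← hc j]
  exact le_sSup (Set.mem_image_of_mem _ hj)

lemma equi_ne_top (hK : KernelFun K) (hν : ∀ i, 0 < ν i) (hJ : NFieldFun n J)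
    (hx : closedSimplex n x) {c : EReal} (hc : ∀ j, intMax n ν K J x j = c) : c ≠ ⊤ := by
  obtain ⟨B, hB⟩ := F_bound hK hν hJ hx (J := J) (ν := ν)
  have h1 : c ≤ (B : EReal) := by
    rw [← hc 0]
    apply sSup_le
    rintro v ⟨u, hu, rfl⟩
    exact hB u (interval_subset hx 0 hu)
  exact (lt_of_le_of_lt h1 (EReal.coe_lt_top B)).ne

lemma equi_max_exists (hK : KernelFun K) (hν : ∀ i, 0 < ν i) (hJ : NFieldFun n J)
    (hJusc : UpperSemicontinuousOn J (Icc (0:ℝ) 1)) (hx : closedSimplex n x) {c : EReal}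
    (hc : ∀ j, intMax n ν K J x j = c) (j : Fin (n+1)) :
    ∃ t ∈ Icc (extNodes n x j.castSucc) (extNodes n x j.succ), sumTrans n ν K J x t = c := by
  have hne : (Icc (extNodes n x j.castSucc) (extNodes n x j.succ)).Nonempty :=
    nonempty_Icc.mpr (interval_nonempty hx j)
  obtain ⟨t, ht, hmax⟩ := usc_max isCompact_Icc hne
    ((usc_F hK hν hJ hJusc hx).mono (interval_subset hx j))
  refine ⟨t, ht, ?_⟩
  rw [← hc j]
  apply le_antisymm
  · exact le_sSup (Set.mem_image_of_mem _ ht)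
  · apply sSup_le
    rintro v ⟨u, hu, rfl⟩
    exact hmax u hu

end Package

end EquiAux2

namespace EquiAux2
open Set Filter Topology EquiAux

lemma step1 {n : ℕ} {ν : Fin n → ℝ} {K J : ℝ → EReal}
    (hν : ∀ i, 0 < ν i) (hK : KernelFun K) (hSM : KStrictMonotone K) (hJ : NFieldFun n J)
    (hJusc : UpperSemicontinuousOn J (Icc (0:ℝ) 1))
    {x y : Fin n → ℝ} (hx : closedSimplex n x) (hy : closedSimplex n y)
    {c c' : EReal}
    (hcx : ∀ j, intMax n ν K J x j = c) (hcy : ∀ j, intMax n ν K J y j = c')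
    (hc'b : c' ≠ ⊥)
    (j : Fin (n+1))
    (hsplit : ∀ i : Fin n, ((i:ℕ) < (j:ℕ) → x i ≤ y i) ∧ ((j:ℕ) ≤ (i:ℕ) → y i ≤ x i))
    (i₀ : Fin n) (hne0 : x i₀ ≠ y i₀) : c' < c := by
  have hc'top : c' ≠ ⊤ := equi_ne_top hK hν hJ hy hcy
  obtain ⟨s, hs, hFs⟩ := equi_max_exists hK hν hJ hJusc hy hcy j
  have hs01 : s ∈ Icc (0:ℝ) 1 := interval_subset hy j hs
  -- positions of s relative to the y-nodes
  have hyls : ∀ i : Fin n, (i:ℕ) < (j:ℕ) → y i ≤ s := by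
    intro i hi
    refine le_trans (node_le_ext hy i j.castSucc ?_) hs.1
    rw [Fin.coe_castSucc]; omega
  have hsly : ∀ i : Fin n, (j:ℕ) ≤ (i:ℕ) → s ≤ y i := by
    intro i hi
    refine le_trans hs.2 (ext_le_node hy i j.succ ?_)
    rw [Fin.val_succ]; omega
  -- terms at s are finite for the y-system
  have hterm := sumTrans_terms_ne_bot hν hK.1 (ν := ν) (J := J) (x := y) (t := s)
    (by rw [hFs]; exact hc'b)
  -- termwise comparison
  have hcomp : ∀ i : Fin n, K (s - y i) ≤ K (s - x i) := by
    intro i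
    rcases lt_or_ge (i:ℕ) (j:ℕ) with hi | hi
    · have h1 : x i ≤ y i := (hsplit i).1 hi
      have h2 : y i ≤ s := hyls i hi
      exact K_mono hK hSM (by linarith) (by linarith)
        (by linarith [hs01.2, (hx.1 i).1])
    · have h1 : y i ≤ x i := (hsplit i).2 hi
      have h2 : s ≤ y i := hsly i hi
      exact K_anti hK hSM (by linarith [hs01.1, (hx.1 i).2]) (by linarith) (by linarith)
  have hxb : ∀ i : Fin n, K (s - x i) ≠ ⊥ := by
    intro i h
    have := hcomp i
    rw [h, le_bot_iff] at this
    exact hterm.2 i this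
  have hstrict : K (s - y i₀) < K (s - x i₀) := by
    rcases lt_or_ge (i₀:ℕ) (j:ℕ) with hi | hi
    · have h1 : x i₀ < y i₀ := lt_of_le_of_ne ((hsplit i₀).1 hi) hne0
      have h2 : y i₀ ≤ s := hyls i₀ hi
      exact K_mono_strict hK hSM (by linarith) (by linarith)
        (by linarith [hs01.2, (hx.1 i₀).1])
    · have h1 : y i₀ < x i₀ := lt_of_le_of_ne ((hsplit i₀).2 hi) (Ne.symm hne0)
      have h2 : s ≤ y i₀ := hsly i₀ hi
      exact K_anti_strict hK hSM (by linarith [hs01.1, (hx.1 i₀).2]) (by linarith) (by linarith)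
  -- real versions
  have hd1 : sumTrans n ν K J y s
      = (((J s).toReal + ∑ i, ν i * (K (s - y i)).toReal : ℝ) : EReal) :=
    sumTrans_toReal hν hK.1 hJ.1 hterm.1 hterm.2
  have hd2 : sumTrans n ν K J x s
      = (((J s).toReal + ∑ i, ν i * (K (s - x i)).toReal : ℝ) : EReal) :=
    sumTrans_toReal hν hK.1 hJ.1 hterm.1 hxb
  have hsumlt : (∑ i, ν i * (K (s - y i)).toReal) < ∑ i, ν i * (K (s - x i)).toReal := by
    apply Finset.sum_lt_sum
    · intro i _
      exact mul_le_mul_of_nonneg_left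
        (EReal.toReal_le_toReal (hcomp i) (hterm.2 i) (hK.1 _)) (hν i).le
    · refine ⟨i₀, Finset.mem_univ i₀, ?_⟩
      apply mul_lt_mul_of_pos_left _ (hν i₀)
      have h := hstrict
      rw [← EReal.coe_toReal (hK.1 (s - y i₀)) (hterm.2 i₀),
        ← EReal.coe_toReal (hK.1 (s - x i₀)) (hxb i₀), EReal.coe_lt_coe_iff] at h
      exact h
  -- s belongs to the j-th interval of the x-system
  have hLext : extNodes n x j.castSucc ≤ extNodes n y j.castSucc := by
    induction j using Fin.cases with
    | zero => rw [show ((0:Fin (n+1)).castSucc) = (0 : Fin (n+2)) from rfl,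
        extNodes_zero, extNodes_zero]
    | succ jj =>
        rw [← Fin.succ_castSucc, extNodes_node, extNodes_node]
        exact (hsplit jj).1 (by rw [Fin.val_succ]; omega)
  have hRext : extNodes n y j.succ ≤ extNodes n x j.succ := by
    induction j using Fin.lastCases with
    | last => rw [Fin.succ_last, extNodes_last, extNodes_last]
    | cast jj =>
        rw [extNodes_node, extNodes_node]
        exact (hsplit jj).2 (le_of_eq (Fin.coe_castSucc jj))
  have hsx : s ∈ Icc (extNodes n x j.castSucc) (extNodes n x j.succ) :=
    ⟨le_trans hLext hs.1, le_trans hs.2 hRext⟩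
  have hFxle : sumTrans n ν K J x s ≤ c := by
    rw [← hcx j]
    exact le_sSup (Set.mem_image_of_mem _ hsx)
  have hlt : c' < sumTrans n ν K J x s := by
    rw [hd2, ← hFs, hd1, EReal.coe_lt_coe_iff]
    linarith
  exact lt_of_lt_of_le hlt hFxle

end EquiAux2

namespace EquiAux2
open Set Filter Topology EquiAux

lemma step2a {n : ℕ} {ν : Fin n → ℝ} {K J : ℝ → EReal}
    (hν : ∀ i, 0 < ν i) (hK : KernelFun K) (hSM : KStrictMonotone K) (hJ : NFieldFun n J)
    (hJusc : UpperSemicontinuousOn J (Icc (0:ℝ) 1))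
    {x y : Fin n → ℝ} (hx : closedSimplex n x) (hy : closedSimplex n y)
    {c c' : EReal}
    (hcx : ∀ j, intMax n ν K J x j = c) (hcy : ∀ j, intMax n ν K J y j = c')
    (hcb : c ≠ ⊥) (hc'b : c' ≠ ⊥)
    {p q : Fin n} (hpq : (p:ℕ) < (q:ℕ))
    (hxp : x p < y p) (hyq : y q < x q)
    (hL : ∀ i : Fin n, x i < y i → (i:ℕ) ≤ (p:ℕ))
    (hR : ∀ i : Fin n, y i < x i → (q:ℕ) ≤ (i:ℕ))
    (hlt : c' < c) : False := by
  have hctop : c ≠ ⊤ := equi_ne_top hK hν hJ hx hcx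
  have hc'top : c' ≠ ⊤ := equi_ne_top hK hν hJ hy hcy
  -- the three special points
  obtain ⟨t0, ht0, hF0⟩ := equi_max_exists hK hν hJ hJusc hx hcx 0
  obtain ⟨tn, htn, hFn⟩ := equi_max_exists hK hν hJ hJusc hx hcx (Fin.last n)
  have hq1 : (p:ℕ)+1 < n+1 := by omega
  set jp : Fin (n+1) := ⟨(p:ℕ)+1, hq1⟩ with hjp
  obtain ⟨s, hs, hFs⟩ := equi_max_exists hK hν hJ hJusc hy hcy jp
  have ht001 : t0 ∈ Icc (0:ℝ) 1 := interval_subset hx 0 ht0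
  have htn01 : tn ∈ Icc (0:ℝ) 1 := interval_subset hx (Fin.last n) htn
  have hs01 : s ∈ Icc (0:ℝ) 1 := interval_subset hy jp hs
  -- positions
  have ht0i : ∀ i : Fin n, t0 ≤ x i := by
    intro i
    refine le_trans ht0.2 (ext_le_node hx i (0:Fin (n+1)).succ ?_)
    simp
  have htni : ∀ i : Fin n, x i ≤ tn := by
    intro i
    refine le_trans (node_le_ext hx i (Fin.last n).castSucc ?_) htn.1
    simp [Fin.last]
  have hsyp : y p ≤ s := by
    refine le_trans (node_le_ext hy p jp.castSucc ?_) hs.1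
    simp [hjp]
  have hsyq : s ≤ y q := by
    refine le_trans hs.2 (ext_le_node hy q jp.succ ?_)
    simp [hjp]
    omega
  have ht0s : t0 < s := lt_of_le_of_lt (ht0i p) (lt_of_lt_of_le hxp hsyp)
  have hstn : s < tn := lt_of_le_of_lt hsyq (lt_of_lt_of_le hyq (htni q))
  -- finiteness of all terms at the three points
  have hterm0 := sumTrans_terms_ne_bot hν hK.1 (ν := ν) (J := J) (x := x) (t := t0)
    (by rw [hF0]; exact hcb)
  have htermn := sumTrans_terms_ne_bot hν hK.1 (ν := ν) (J := J) (x := x) (t := tn)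
    (by rw [hFn]; exact hcb)
  have hterms := sumTrans_terms_ne_bot hν hK.1 (ν := ν) (J := J) (x := y) (t := s)
    (by rw [hFs]; exact hc'b)
  have ht0y : ∀ i : Fin n, K (t0 - y i) ≠ ⊥ := by
    intro i
    rcases lt_trichotomy (x i) (y i) with hi | hi | hi
    · have : t0 < y i := lt_of_le_of_lt (ht0i i) hi
      exact K_ne_bot hK hSM (by linarith [ht001.1, (hy.1 i).2])
        (by linarith [ht001.2, (hy.1 i).1]) (by intro h; linarith [sub_eq_zero.mp h])
    · rw [← hi]; exact hterm0.2 i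
    · have hqi := hR i hi
      have hpi : (p:ℕ) ≤ (i:ℕ) := by omega
      have : t0 < y i :=
        lt_of_le_of_lt (ht0i p) (lt_of_lt_of_le hxp (hy.2 (show p ≤ i by rw [Fin.le_def]; omega)))
      exact K_ne_bot hK hSM (by linarith [ht001.1, (hy.1 i).2])
        (by linarith [ht001.2, (hy.1 i).1]) (by intro h; linarith [sub_eq_zero.mp h])
  have htny : ∀ i : Fin n, K (tn - y i) ≠ ⊥ := by
    intro i
    rcases lt_trichotomy (x i) (y i) with hi | hi | hi
    · have hip := hL i hi
      have hiq : (i:ℕ) ≤ (q:ℕ) := by omega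
      have : y i < tn :=
        lt_of_le_of_lt (hy.2 (show i ≤ q by rw [Fin.le_def]; omega))
          (lt_of_lt_of_le hyq (htni q))
      exact K_ne_bot hK hSM (by linarith [htn01.1, (hy.1 i).2])
        (by linarith [htn01.2, (hy.1 i).1]) (by intro h; linarith [sub_eq_zero.mp h])
    · rw [← hi]; exact htermn.2 i
    · have : y i < tn := lt_of_lt_of_le hi (htni i)
      exact K_ne_bot hK hSM (by linarith [htn01.1, (hy.1 i).2])
        (by linarith [htn01.2, (hy.1 i).1]) (by intro h; linarith [sub_eq_zero.mp h])
  have hsx : ∀ i : Fin n, K (s - x i) ≠ ⊥ := by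
    intro i
    rcases lt_trichotomy (x i) (y i) with hi | hi | hi
    · have hip := hL i hi
      have : x i < s := lt_of_lt_of_le hi
        (le_trans (hy.2 (show i ≤ p by rw [Fin.le_def]; omega)) hsyp)
      exact K_ne_bot hK hSM (by linarith [hs01.1, (hx.1 i).2])
        (by linarith [hs01.2, (hx.1 i).1]) (by intro h; linarith [sub_eq_zero.mp h])
    · rw [hi]; exact hterms.2 i
    · have hqi := hR i hi
      have : s < x i := lt_of_le_of_lt hsyq
        (lt_of_lt_of_le hyq (hx.2 (show q ≤ i by rw [Fin.le_def]; omega)))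
      exact K_ne_bot hK hSM (by linarith [hs01.1, (hx.1 i).2])
        (by linarith [hs01.2, (hx.1 i).1]) (by intro h; linarith [sub_eq_zero.mp h])
  -- real decompositions
  have hd0x : (J t0).toReal + ∑ i, ν i * (K (t0 - x i)).toReal = c.toReal := by
    have := sumTrans_toReal hν hK.1 hJ.1 hterm0.1 hterm0.2
    rw [this] at hF0
    rw [← hF0, EReal.toReal_coe]
  have hd0y : (J t0).toReal + ∑ i, ν i * (K (t0 - y i)).toReal ≤ c'.toReal := by
    have hle := equi_le hy hcy t0 ht001
    rw [sumTrans_toReal hν hK.1 hJ.1 hterm0.1 ht0y, ← EReal.coe_toReal hc'top hc'b,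
      EReal.coe_le_coe_iff] at hle
    exact hle
  have hdnx : (J tn).toReal + ∑ i, ν i * (K (tn - x i)).toReal = c.toReal := by
    have := sumTrans_toReal hν hK.1 hJ.1 htermn.1 htermn.2
    rw [this] at hFn
    rw [← hFn, EReal.toReal_coe]
  have hdny : (J tn).toReal + ∑ i, ν i * (K (tn - y i)).toReal ≤ c'.toReal := by
    have hle := equi_le hy hcy tn htn01
    rw [sumTrans_toReal hν hK.1 hJ.1 htermn.1 htny, ← EReal.coe_toReal hc'top hc'b,
      EReal.coe_le_coe_iff] at hle
    exact hle
  have hdsy : (J s).toReal + ∑ i, ν i * (K (s - y i)).toReal = c'.toReal := by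
    have := sumTrans_toReal hν hK.1 hJ.1 hterms.1 hterms.2
    rw [this] at hFs
    rw [← hFs, EReal.toReal_coe]
  have hdsx : (J s).toReal + ∑ i, ν i * (K (s - x i)).toReal ≤ c.toReal := by
    have hle := equi_le hx hcx s hs01
    rw [sumTrans_toReal hν hK.1 hJ.1 hterms.1 hsx, ← EReal.coe_toReal hctop hcb,
      EReal.coe_le_coe_iff] at hle
    exact hle
  have hltr : c'.toReal < c.toReal := by
    rw [← EReal.coe_lt_coe_iff, EReal.coe_toReal hc'top hc'b, EReal.coe_toReal hctop hcb]
    exact hlt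
  -- abbreviations for the real terms
  set ax0 : Fin n → ℝ := fun i => ν i * (K (t0 - x i)).toReal with hax0
  set ay0 : Fin n → ℝ := fun i => ν i * (K (t0 - y i)).toReal with hay0
  set axn : Fin n → ℝ := fun i => ν i * (K (tn - x i)).toReal with haxn
  set ayn : Fin n → ℝ := fun i => ν i * (K (tn - y i)).toReal with hayn
  set axs : Fin n → ℝ := fun i => ν i * (K (s - x i)).toReal with haxs
  set ays : Fin n → ℝ := fun i => ν i * (K (s - y i)).toReal with hays
  classical
  -- helper to convert an EReal 4-point inequality to reals
  have toRealIneq : ∀ {A B C D : EReal}, A + B ≤ C + D → A ≠ ⊥ → B ≠ ⊥ → C ≠ ⊤ → D ≠ ⊤ →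
      C ≠ ⊥ → D ≠ ⊥ → A ≠ ⊤ → B ≠ ⊤ → A.toReal + B.toReal ≤ C.toReal + D.toReal := by
    intro A B C D h hA hB hC hD hC' hD' hA' hB'
    rw [← EReal.coe_toReal hA' hA, ← EReal.coe_toReal hB' hB, ← EReal.coe_toReal hC hC',
      ← EReal.coe_toReal hD hD', ← EReal.coe_add, ← EReal.coe_add,
      EReal.coe_le_coe_iff] at h
    exact h
  -- termwise inequalities
  have hI : ∀ i : Fin n,
      (if x i < y i then axn i - ayn i else 0) + (if y i < x i then ax0 i - ay0 i else 0)
        ≤ axs i - ays i := by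
    intro i
    rcases lt_trichotomy (x i) (y i) with hi | hi | hi
    · rw [if_pos hi, if_neg (by linarith)]
      have hip := hL i hi
      have hyis : y i ≤ s := le_trans (hy.2 (show i ≤ p by rw [Fin.le_def]; omega)) hsyp
      have hc1 := concave_shift_right hK (p := s - y i) (q := s - x i) (Δ := tn - s)
        (by linarith [hs01.1, (hy.1 i).1, hyis])
        (by linarith) (by linarith) (by linarith [htn01.2, (hx.1 i).1])
      rw [show s - x i + (tn - s) = tn - x i by ring,
        show s - y i + (tn - s) = tn - y i by ring] at hc1
      have := toRealIneq hc1 (hterms.2 i) (htermn.2 i) (hK.1 _) (hK.1 _)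
        (hsx i) (htny i) (hK.1 _) (hK.1 _)
      have hmul := mul_le_mul_of_nonneg_left this (hν i).le
      simp only [hax0, hay0, haxn, hayn, haxs, hays]
      nlinarith [hmul]
    · rw [if_neg (by simp [hi]), if_neg (by simp [hi])]
      have : axs i = ays i := by simp [haxs, hays, hi]
      linarith
    · rw [if_neg (by linarith), if_pos hi]
      have hqi := hR i hi
      have hsyi : s ≤ y i := le_trans hsyq (hy.2 (show q ≤ i by rw [Fin.le_def]; omega))
      have hc1 := concave_shift_left hK (p := t0 - x i) (q := t0 - y i) (Δ := s - t0)
        (by linarith [ht001.1, (hx.1 i).2]) (by linarith) (by linarith)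
        (by linarith [hsyi])
      rw [show t0 - y i + (s - t0) = s - y i by ring,
        show t0 - x i + (s - t0) = s - x i by ring] at hc1
      have := toRealIneq hc1 (hterm0.2 i) (hterms.2 i) (hK.1 _) (hK.1 _)
        (ht0y i) (hsx i) (hK.1 _) (hK.1 _)
      have hmul := mul_le_mul_of_nonneg_left this (hν i).le
      simp only [hax0, hay0, haxn, hayn, haxs, hays]
      nlinarith [hmul]
  -- non-R terms at t0 are nonpositive
  have hII : ∀ i : Fin n, ¬(y i < x i) → ax0 i - ay0 i ≤ 0 := by
    intro i hi
    rcases eq_or_lt_of_le (not_lt.mp hi) with hie | hilt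
    · simp [hax0, hay0, ← hie]
    · have hKle : K (t0 - x i) ≤ K (t0 - y i) :=
        K_anti hK hSM (by linarith [ht001.1, (hy.1 i).2]) (by linarith)
          (by linarith [ht0i i])
      have := EReal.toReal_le_toReal hKle (hterm0.2 i) (hK.1 _)
      simp only [hax0, hay0]
      nlinarith [mul_le_mul_of_nonneg_left this (hν i).le]
  have hIII : ∀ i : Fin n, ¬(x i < y i) → axn i - ayn i ≤ 0 := by
    intro i hi
    rcases eq_or_lt_of_le (not_lt.mp hi) with hie | hilt
    · simp [haxn, hayn, hie]
    · have hKle : K (tn - x i) ≤ K (tn - y i) :=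
        K_mono hK hSM (by linarith [htni i]) (by linarith)
          (by linarith [htn01.2, (hy.1 i).1])
      have := EReal.toReal_le_toReal hKle (htermn.2 i) (hK.1 _)
      simp only [haxn, hayn]
      nlinarith [mul_le_mul_of_nonneg_left this (hν i).le]
  -- sums
  have hS1 : (∑ i, (ax0 i - ay0 i)) ≤ ∑ i, (if y i < x i then ax0 i - ay0 i else 0) := by
    apply Finset.sum_le_sum
    intro i _
    by_cases hi : y i < x i
    · rw [if_pos hi]
    · rw [if_neg hi]; exact hII i hi
  have hS2 : (∑ i, (axn i - ayn i)) ≤ ∑ i, (if x i < y i then axn i - ayn i else 0) := by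
    apply Finset.sum_le_sum
    intro i _
    by_cases hi : x i < y i
    · rw [if_pos hi]
    · rw [if_neg hi]; exact hIII i hi
  have hSI : (∑ i, (if x i < y i then axn i - ayn i else 0))
      + (∑ i, (if y i < x i then ax0 i - ay0 i else 0)) ≤ ∑ i, (axs i - ays i) := by
    rw [← Finset.sum_add_distrib]
    exact Finset.sum_le_sum fun i _ => hI i
  have e1 : ∑ i, (ax0 i - ay0 i) = (∑ i, ax0 i) - ∑ i, ay0 i := Finset.sum_sub_distrib _ _
  have e2 : ∑ i, (axn i - ayn i) = (∑ i, axn i) - ∑ i, ayn i := Finset.sum_sub_distrib _ _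
  have e3 : ∑ i, (axs i - ays i) = (∑ i, axs i) - ∑ i, ays i := Finset.sum_sub_distrib _ _
  have hgap0 : c.toReal - c'.toReal ≤ (∑ i, ax0 i) - ∑ i, ay0 i := by linarith [hd0x, hd0y]
  have hgapn : c.toReal - c'.toReal ≤ (∑ i, axn i) - ∑ i, ayn i := by linarith [hdnx, hdny]
  have hgaps : (∑ i, axs i) - (∑ i, ays i) ≤ c.toReal - c'.toReal := by linarith [hdsx, hdsy]
  linarith [hS1, hS2, hSI, e1, e2, e3, hgap0, hgapn, hgaps, hltr]

end EquiAux2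

namespace EquiAux2
open Set Filter Topology EquiAux

lemma toReal4 {A B C D : EReal} (h : A + B ≤ C + D) (hA : A ≠ ⊥) (hB : B ≠ ⊥)
    (hC : C ≠ ⊤) (hD : D ≠ ⊤) (hC' : C ≠ ⊥) (hD' : D ≠ ⊥) (hA' : A ≠ ⊤) (hB' : B ≠ ⊤) :
    A.toReal + B.toReal ≤ C.toReal + D.toReal := by
  rw [← EReal.coe_toReal hA' hA, ← EReal.coe_toReal hB' hB, ← EReal.coe_toReal hC hC',
    ← EReal.coe_toReal hD hD', ← EReal.coe_add, ← EReal.coe_add,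
    EReal.coe_le_coe_iff] at h
  exact h

lemma K_ne_bot' {K : ℝ → EReal} (hK : KernelFun K) (hSM : KStrictMonotone K) {a b : ℝ}
    (ha : a ∈ Set.Icc (0:ℝ) 1) (hb : b ∈ Set.Icc (0:ℝ) 1) (hne : a ≠ b) : K (a - b) ≠ ⊥ :=
  K_ne_bot hK hSM (by linarith [ha.1, hb.2]) (by linarith [ha.2, hb.1])
    (sub_ne_zero.mpr hne)

section Case4

variable {ν : Fin 3 → ℝ} {K J : ℝ → EReal} {x y : Fin 3 → ℝ} {c c' : EReal}

/-- Pattern (−,+,−) together with `c' ≤ c` is impossible. -/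
lemma case4A (hν : ∀ i, 0 < ν i) (hK : KernelFun K) (hSM : KStrictMonotone K)
    (hJ : NFieldFun 3 J) (hJusc : UpperSemicontinuousOn J (Icc (0:ℝ) 1))
    (hx : closedSimplex 3 x) (hy : closedSimplex 3 y)
    (hcx : ∀ j, intMax 3 ν K J x j = c) (hcy : ∀ j, intMax 3 ν K J y j = c')
    (hcb : c ≠ ⊥) (hc'b : c' ≠ ⊥)
    (h0 : x 0 < y 0) (h1 : y 1 < x 1) (h2 : x 2 < y 2) (hcc : c' ≤ c) : False := by
  have hctop : c ≠ ⊤ := equi_ne_top hK hν hJ hx hcx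
  have hc'top : c' ≠ ⊤ := equi_ne_top hK hν hJ hy hcy
  have hx01 : x 0 ≤ x 1 := hx.2 (by decide)
  have hx12 : x 1 ≤ x 2 := hx.2 (by decide)
  have hy01 : y 0 ≤ y 1 := hy.2 (by decide)
  have hy12 : y 1 ≤ y 2 := hy.2 (by decide)
  have hx0m := hx.1 0
  have hx1m := hx.1 1
  have hx2m := hx.1 2
  have hy0m := hy.1 0
  have hy1m := hy.1 1
  have hy2m := hy.1 2
  obtain ⟨t0, ht0, hF0⟩ := equi_max_exists hK hν hJ hJusc hx hcx 0
  obtain ⟨t2, ht2, hF2⟩ := equi_max_exists hK hν hJ hJusc hx hcx 2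
  obtain ⟨s1, hs1, hFs⟩ := equi_max_exists hK hν hJ hJusc hy hcy 1
  have ht001 : t0 ∈ Icc (0:ℝ) 1 := interval_subset hx 0 ht0
  have ht201 : t2 ∈ Icc (0:ℝ) 1 := interval_subset hx 2 ht2
  have hs101 : s1 ∈ Icc (0:ℝ) 1 := interval_subset hy 1 hs1
  have hpt0 : t0 ≤ x 0 := le_trans ht0.2 (ext_le_node hx 0 (0:Fin 4).succ (by decide))
  have hpt2l : x 1 ≤ t2 := le_trans (node_le_ext hx 1 (2:Fin 4).castSucc (by decide)) ht2.1
  have hpt2r : t2 ≤ x 2 := le_trans ht2.2 (ext_le_node hx 2 (2:Fin 4).succ (by decide))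
  have hps1l : y 0 ≤ s1 := le_trans (node_le_ext hy 0 (1:Fin 4).castSucc (by decide)) hs1.1
  have hps1r : s1 ≤ y 1 := le_trans hs1.2 (ext_le_node hy 1 (1:Fin 4).succ (by decide))
  have hterm0 := sumTrans_terms_ne_bot hν hK.1 (ν := ν) (J := J) (x := x) (t := t0)
    (by rw [hF0]; exact hcb)
  have hterm2 := sumTrans_terms_ne_bot hν hK.1 (ν := ν) (J := J) (x := x) (t := t2)
    (by rw [hF2]; exact hcb)
  have hterms := sumTrans_terms_ne_bot hν hK.1 (ν := ν) (J := J) (x := y) (t := s1)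
    (by rw [hFs]; exact hc'b)
  -- cross finiteness
  have ht0y0 : K (t0 - y 0) ≠ ⊥ := K_ne_bot' hK hSM ht001 hy0m (by intro h; linarith)
  have ht0y1 : K (t0 - y 1) ≠ ⊥ := K_ne_bot' hK hSM ht001 hy1m (by intro h; linarith)
  have ht0y2 : K (t0 - y 2) ≠ ⊥ := K_ne_bot' hK hSM ht001 hy2m (by intro h; linarith)
  have ht0y : ∀ i : Fin 3, K (t0 - y i) ≠ ⊥ := by
    intro i; fin_cases i; exacts [ht0y0, ht0y1, ht0y2]
  have hs1x0 : K (s1 - x 0) ≠ ⊥ := K_ne_bot' hK hSM hs101 hx0m (by intro h; linarith)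
  have hs1x1 : K (s1 - x 1) ≠ ⊥ := K_ne_bot' hK hSM hs101 hx1m (by intro h; linarith)
  have hs1x2 : K (s1 - x 2) ≠ ⊥ := K_ne_bot' hK hSM hs101 hx2m (by intro h; linarith)
  have hs1x : ∀ i : Fin 3, K (s1 - x i) ≠ ⊥ := by
    intro i; fin_cases i; exacts [hs1x0, hs1x1, hs1x2]
  have ht2y0 : K (t2 - y 0) ≠ ⊥ := K_ne_bot' hK hSM ht201 hy0m (by intro h; linarith)
  have ht2y1 : K (t2 - y 1) ≠ ⊥ := K_ne_bot' hK hSM ht201 hy1m (by intro h; linarith)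
  have ht2y2 : K (t2 - y 2) ≠ ⊥ := K_ne_bot' hK hSM ht201 hy2m (by intro h; linarith)
  have ht2y : ∀ i : Fin 3, K (t2 - y i) ≠ ⊥ := by
    intro i; fin_cases i; exacts [ht2y0, ht2y1, ht2y2]
  have hx0b := hterm0.2 0
  have hx1b := hterm0.2 1
  have hx2b := hterm0.2 2
  have h2x0b := hterm2.2 0
  have h2x1b := hterm2.2 1
  have h2x2b := hterm2.2 2
  have hsy0b := hterms.2 0
  have hsy1b := hterms.2 1
  have hsy2b := hterms.2 2
  -- decompositions (expanded over Fin 3)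
  have hd0x : c.toReal = (J t0).toReal + (ν 0 * (K (t0 - x 0)).toReal
      + ν 1 * (K (t0 - x 1)).toReal + ν 2 * (K (t0 - x 2)).toReal) := by
    have h := sumTrans_toReal hν hK.1 hJ.1 hterm0.1 hterm0.2
    rw [h] at hF0
    rw [← hF0, EReal.toReal_coe, Fin.sum_univ_three]
  have hd0y : (J t0).toReal + (ν 0 * (K (t0 - y 0)).toReal
      + ν 1 * (K (t0 - y 1)).toReal + ν 2 * (K (t0 - y 2)).toReal) ≤ c'.toReal := by
    have hle := equi_le hy hcy t0 ht001
    rw [sumTrans_toReal hν hK.1 hJ.1 hterm0.1 ht0y, ← EReal.coe_toReal hc'top hc'b,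
      EReal.coe_le_coe_iff, Fin.sum_univ_three] at hle
    linarith
  have hd2x : c.toReal = (J t2).toReal + (ν 0 * (K (t2 - x 0)).toReal
      + ν 1 * (K (t2 - x 1)).toReal + ν 2 * (K (t2 - x 2)).toReal) := by
    have h := sumTrans_toReal hν hK.1 hJ.1 hterm2.1 hterm2.2
    rw [h] at hF2
    rw [← hF2, EReal.toReal_coe, Fin.sum_univ_three]
  have hd2y : (J t2).toReal + (ν 0 * (K (t2 - y 0)).toReal
      + ν 1 * (K (t2 - y 1)).toReal + ν 2 * (K (t2 - y 2)).toReal) ≤ c'.toReal := by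
    have hle := equi_le hy hcy t2 ht201
    rw [sumTrans_toReal hν hK.1 hJ.1 hterm2.1 ht2y, ← EReal.coe_toReal hc'top hc'b,
      EReal.coe_le_coe_iff, Fin.sum_univ_three] at hle
    linarith
  have hdsy : c'.toReal = (J s1).toReal + (ν 0 * (K (s1 - y 0)).toReal
      + ν 1 * (K (s1 - y 1)).toReal + ν 2 * (K (s1 - y 2)).toReal) := by
    have h := sumTrans_toReal hν hK.1 hJ.1 hterms.1 hterms.2
    rw [h] at hFs
    rw [← hFs, EReal.toReal_coe, Fin.sum_univ_three]
  have hdsx : (J s1).toReal + (ν 0 * (K (s1 - x 0)).toReal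
      + ν 1 * (K (s1 - x 1)).toReal + ν 2 * (K (s1 - x 2)).toReal) ≤ c.toReal := by
    have hle := equi_le hx hcx s1 hs101
    rw [sumTrans_toReal hν hK.1 hJ.1 hterms.1 hs1x, ← EReal.coe_toReal hctop hcb,
      EReal.coe_le_coe_iff, Fin.sum_univ_three] at hle
    linarith
  have hccr : c'.toReal ≤ c.toReal := EReal.toReal_le_toReal hcc hc'b hctop
  -- sign inequalities at t0 for nodes 0 and 2
  have sign0 : (K (t0 - x 0)).toReal ≤ (K (t0 - y 0)).toReal := by
    refine EReal.toReal_le_toReal ?_ (hterm0.2 0) (hK.1 _)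
    exact K_anti hK hSM (by linarith [ht001.1, hy0m.2]) (by linarith) (by linarith)
  have sign2 : (K (t0 - x 2)).toReal ≤ (K (t0 - y 2)).toReal := by
    refine EReal.toReal_le_toReal ?_ (hterm0.2 2) (hK.1 _)
    exact K_anti hK hSM (by linarith [ht001.1, hy2m.2]) (by linarith)
      (by linarith [hpt0])
  -- monotone transport of node 1 difference from t0 to s1 (left side concavity)
  have mono1 : (K (t0 - x 1)).toReal + (K (s1 - y 1)).toReal
      ≤ (K (t0 - y 1)).toReal + (K (s1 - x 1)).toReal := by
    have hc1 := concave_shift_left hK (p := t0 - x 1) (q := t0 - y 1) (Δ := s1 - t0)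
      (by linarith [ht001.1, hx1m.2]) (by linarith) (by linarith [hpt0, hps1l])
      (by linarith)
    rw [show t0 - y 1 + (s1 - t0) = s1 - y 1 by ring,
      show t0 - x 1 + (s1 - t0) = s1 - x 1 by ring] at hc1
    exact toReal4 hc1 (hterm0.2 1) (hterms.2 1) (hK.1 _) (hK.1 _) ht0y1 hs1x1
      (hK.1 _) (hK.1 _)
  -- monotone transport of node 0 difference from s1 to t2 (right side concavity)
  have mono0 : (K (s1 - y 0)).toReal + (K (t2 - x 0)).toReal
      ≤ (K (s1 - x 0)).toReal + (K (t2 - y 0)).toReal := by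
    have hc1 := concave_shift_right hK (p := s1 - y 0) (q := s1 - x 0) (Δ := t2 - s1)
      (by linarith) (by linarith) (by linarith) (by linarith [ht201.2, hx0m.1])
    rw [show s1 - x 0 + (t2 - s1) = t2 - x 0 by ring,
      show s1 - y 0 + (t2 - s1) = t2 - y 0 by ring] at hc1
    exact toReal4 hc1 (hterms.2 0) (hterm2.2 0) (hK.1 _) (hK.1 _) hs1x0 ht2y0
      (hK.1 _) (hK.1 _)
  -- monotone transport of node 2 difference from s1 to t2 (left side concavity)
  have mono2 : (K (s1 - y 2)).toReal + (K (t2 - x 2)).toReal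
      ≤ (K (s1 - x 2)).toReal + (K (t2 - y 2)).toReal := by
    have hc1 := concave_shift_left hK (p := s1 - y 2) (q := s1 - x 2) (Δ := t2 - s1)
      (by linarith [hs101.1, hy2m.2]) (by linarith) (by linarith) (by linarith)
    rw [show s1 - x 2 + (t2 - s1) = t2 - x 2 by ring,
      show s1 - y 2 + (t2 - s1) = t2 - y 2 by ring] at hc1
    exact toReal4 hc1 (hterms.2 2) (hterm2.2 2) (hK.1 _) (hK.1 _) hs1x2 ht2y2
      (hK.1 _) (hK.1 _)
  -- strict inequality for node 1 at t2
  have strict1 : (K (t2 - x 1)).toReal < (K (t2 - y 1)).toReal := by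
    have h := K_mono_strict hK hSM (a := t2 - x 1) (b := t2 - y 1)
      (by linarith) (by linarith) (by linarith [ht201.2, hy1m.1])
    rw [← EReal.coe_toReal (hK.1 (t2 - x 1)) h2x1b,
      ← EReal.coe_toReal (hK.1 (t2 - y 1)) ht2y1, EReal.coe_lt_coe_iff] at h
    exact h
  -- scaled versions
  have m0 := mul_le_mul_of_nonneg_left mono0 (hν 0).le
  have m1 := mul_le_mul_of_nonneg_left mono1 (hν 1).le
  have m2 := mul_le_mul_of_nonneg_left mono2 (hν 2).le
  have msign0 := mul_le_mul_of_nonneg_left sign0 (hν 0).le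
  have msign2 := mul_le_mul_of_nonneg_left sign2 (hν 2).le
  have mstrict := mul_lt_mul_of_pos_left strict1 (hν 1)
  rw [mul_add, mul_add] at m0 m1 m2
  linarith [hd0x, hd0y, hd2x, hd2y, hdsy, hdsx, hccr, m0, m1, m2, msign0, msign2, mstrict]

end Case4

end EquiAux2

namespace EquiAux2
open Set Filter Topology EquiAux

section Case4B

variable {ν : Fin 3 → ℝ} {K J : ℝ → EReal} {x y : Fin 3 → ℝ} {c c' : EReal}

/-- Pattern (+,−,+) together with `c' ≤ c` is impossible. -/
lemma case4B (hν : ∀ i, 0 < ν i) (hK : KernelFun K) (hSM : KStrictMonotone K)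
    (hJ : NFieldFun 3 J) (hJusc : UpperSemicontinuousOn J (Icc (0:ℝ) 1))
    (hx : closedSimplex 3 x) (hy : closedSimplex 3 y)
    (hcx : ∀ j, intMax 3 ν K J x j = c) (hcy : ∀ j, intMax 3 ν K J y j = c')
    (hcb : c ≠ ⊥) (hc'b : c' ≠ ⊥)
    (h0 : y 0 < x 0) (h1 : x 1 < y 1) (h2 : y 2 < x 2) (hcc : c' ≤ c) : False := by
  have hctop : c ≠ ⊤ := equi_ne_top hK hν hJ hx hcx
  have hc'top : c' ≠ ⊤ := equi_ne_top hK hν hJ hy hcy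
  have hx01 : x 0 ≤ x 1 := hx.2 (by decide)
  have hx12 : x 1 ≤ x 2 := hx.2 (by decide)
  have hy01 : y 0 ≤ y 1 := hy.2 (by decide)
  have hy12 : y 1 ≤ y 2 := hy.2 (by decide)
  have hx0m := hx.1 0
  have hx1m := hx.1 1
  have hx2m := hx.1 2
  have hy0m := hy.1 0
  have hy1m := hy.1 1
  have hy2m := hy.1 2
  obtain ⟨t1, ht1, hF1⟩ := equi_max_exists hK hν hJ hJusc hx hcx 1
  obtain ⟨t3, ht3, hF3⟩ := equi_max_exists hK hν hJ hJusc hx hcx 3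
  obtain ⟨s2, hs2, hFs⟩ := equi_max_exists hK hν hJ hJusc hy hcy 2
  have ht101 : t1 ∈ Icc (0:ℝ) 1 := interval_subset hx 1 ht1
  have ht301 : t3 ∈ Icc (0:ℝ) 1 := interval_subset hx 3 ht3
  have hs201 : s2 ∈ Icc (0:ℝ) 1 := interval_subset hy 2 hs2
  have hpt1l : x 0 ≤ t1 := le_trans (node_le_ext hx 0 (1:Fin 4).castSucc (by decide)) ht1.1
  have hpt1r : t1 ≤ x 1 := le_trans ht1.2 (ext_le_node hx 1 (1:Fin 4).succ (by decide))
  have hpt3 : x 2 ≤ t3 := le_trans (node_le_ext hx 2 (3:Fin 4).castSucc (by decide)) ht3.1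
  have hps2l : y 1 ≤ s2 := le_trans (node_le_ext hy 1 (2:Fin 4).castSucc (by decide)) hs2.1
  have hps2r : s2 ≤ y 2 := le_trans hs2.2 (ext_le_node hy 2 (2:Fin 4).succ (by decide))
  have hterm1 := sumTrans_terms_ne_bot hν hK.1 (ν := ν) (J := J) (x := x) (t := t1)
    (by rw [hF1]; exact hcb)
  have hterm3 := sumTrans_terms_ne_bot hν hK.1 (ν := ν) (J := J) (x := x) (t := t3)
    (by rw [hF3]; exact hcb)
  have hterms := sumTrans_terms_ne_bot hν hK.1 (ν := ν) (J := J) (x := y) (t := s2)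
    (by rw [hFs]; exact hc'b)
  -- cross finiteness
  have ht1y0 : K (t1 - y 0) ≠ ⊥ := K_ne_bot' hK hSM ht101 hy0m (by intro h; linarith)
  have ht1y1 : K (t1 - y 1) ≠ ⊥ := K_ne_bot' hK hSM ht101 hy1m (by intro h; linarith)
  have ht1y2 : K (t1 - y 2) ≠ ⊥ := K_ne_bot' hK hSM ht101 hy2m (by intro h; linarith)
  have ht1y : ∀ i : Fin 3, K (t1 - y i) ≠ ⊥ := by
    intro i; fin_cases i; exacts [ht1y0, ht1y1, ht1y2]
  have hs2x0 : K (s2 - x 0) ≠ ⊥ := K_ne_bot' hK hSM hs201 hx0m (by intro h; linarith)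
  have hs2x1 : K (s2 - x 1) ≠ ⊥ := K_ne_bot' hK hSM hs201 hx1m (by intro h; linarith)
  have hs2x2 : K (s2 - x 2) ≠ ⊥ := K_ne_bot' hK hSM hs201 hx2m (by intro h; linarith)
  have hs2x : ∀ i : Fin 3, K (s2 - x i) ≠ ⊥ := by
    intro i; fin_cases i; exacts [hs2x0, hs2x1, hs2x2]
  have ht3y0 : K (t3 - y 0) ≠ ⊥ := K_ne_bot' hK hSM ht301 hy0m (by intro h; linarith)
  have ht3y1 : K (t3 - y 1) ≠ ⊥ := K_ne_bot' hK hSM ht301 hy1m (by intro h; linarith)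
  have ht3y2 : K (t3 - y 2) ≠ ⊥ := K_ne_bot' hK hSM ht301 hy2m (by intro h; linarith)
  have ht3y : ∀ i : Fin 3, K (t3 - y i) ≠ ⊥ := by
    intro i; fin_cases i; exacts [ht3y0, ht3y1, ht3y2]
  have h1x1b := hterm1.2 1
  have h3x1b := hterm3.2 1
  -- decompositions
  have hd1x : c.toReal = (J t1).toReal + (ν 0 * (K (t1 - x 0)).toReal
      + ν 1 * (K (t1 - x 1)).toReal + ν 2 * (K (t1 - x 2)).toReal) := by
    have h := sumTrans_toReal hν hK.1 hJ.1 hterm1.1 hterm1.2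
    rw [h] at hF1
    rw [← hF1, EReal.toReal_coe, Fin.sum_univ_three]
  have hd1y : (J t1).toReal + (ν 0 * (K (t1 - y 0)).toReal
      + ν 1 * (K (t1 - y 1)).toReal + ν 2 * (K (t1 - y 2)).toReal) ≤ c'.toReal := by
    have hle := equi_le hy hcy t1 ht101
    rw [sumTrans_toReal hν hK.1 hJ.1 hterm1.1 ht1y, ← EReal.coe_toReal hc'top hc'b,
      EReal.coe_le_coe_iff, Fin.sum_univ_three] at hle
    linarith
  have hd3x : c.toReal = (J t3).toReal + (ν 0 * (K (t3 - x 0)).toReal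
      + ν 1 * (K (t3 - x 1)).toReal + ν 2 * (K (t3 - x 2)).toReal) := by
    have h := sumTrans_toReal hν hK.1 hJ.1 hterm3.1 hterm3.2
    rw [h] at hF3
    rw [← hF3, EReal.toReal_coe, Fin.sum_univ_three]
  have hd3y : (J t3).toReal + (ν 0 * (K (t3 - y 0)).toReal
      + ν 1 * (K (t3 - y 1)).toReal + ν 2 * (K (t3 - y 2)).toReal) ≤ c'.toReal := by
    have hle := equi_le hy hcy t3 ht301
    rw [sumTrans_toReal hν hK.1 hJ.1 hterm3.1 ht3y, ← EReal.coe_toReal hc'top hc'b,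
      EReal.coe_le_coe_iff, Fin.sum_univ_three] at hle
    linarith
  have hdsy : c'.toReal = (J s2).toReal + (ν 0 * (K (s2 - y 0)).toReal
      + ν 1 * (K (s2 - y 1)).toReal + ν 2 * (K (s2 - y 2)).toReal) := by
    have h := sumTrans_toReal hν hK.1 hJ.1 hterms.1 hterms.2
    rw [h] at hFs
    rw [← hFs, EReal.toReal_coe, Fin.sum_univ_three]
  have hdsx : (J s2).toReal + (ν 0 * (K (s2 - x 0)).toReal
      + ν 1 * (K (s2 - x 1)).toReal + ν 2 * (K (s2 - x 2)).toReal) ≤ c.toReal := by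
    have hle := equi_le hx hcx s2 hs201
    rw [sumTrans_toReal hν hK.1 hJ.1 hterms.1 hs2x, ← EReal.coe_toReal hctop hcb,
      EReal.coe_le_coe_iff, Fin.sum_univ_three] at hle
    linarith
  have hccr : c'.toReal ≤ c.toReal := EReal.toReal_le_toReal hcc hc'b hctop
  -- sign inequalities at t3 for nodes 0 and 2
  have sign0 : (K (t3 - x 0)).toReal ≤ (K (t3 - y 0)).toReal := by
    refine EReal.toReal_le_toReal ?_ (hterm3.2 0) (hK.1 _)
    exact K_mono hK hSM (by linarith [hpt3]) (by linarith) (by linarith [ht301.2, hy0m.1])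
  have sign2 : (K (t3 - x 2)).toReal ≤ (K (t3 - y 2)).toReal := by
    refine EReal.toReal_le_toReal ?_ (hterm3.2 2) (hK.1 _)
    exact K_mono hK hSM (by linarith) (by linarith) (by linarith [ht301.2, hy2m.1])
  -- transport of node 1 difference from t3 down to s2 (right side)
  have mono1 : (K (s2 - y 1)).toReal + (K (t3 - x 1)).toReal
      ≤ (K (s2 - x 1)).toReal + (K (t3 - y 1)).toReal := by
    have hc1 := concave_shift_right hK (p := s2 - y 1) (q := s2 - x 1) (Δ := t3 - s2)
      (by linarith) (by linarith) (by linarith) (by linarith [ht301.2, hx1m.1])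
    rw [show s2 - x 1 + (t3 - s2) = t3 - x 1 by ring,
      show s2 - y 1 + (t3 - s2) = t3 - y 1 by ring] at hc1
    exact toReal4 hc1 (hterms.2 1) (hterm3.2 1) (hK.1 _) (hK.1 _) hs2x1 ht3y1
      (hK.1 _) (hK.1 _)
  -- transport of node 0 difference from t1 up to s2 (right side)
  have mono0 : (K (t1 - x 0)).toReal + (K (s2 - y 0)).toReal
      ≤ (K (t1 - y 0)).toReal + (K (s2 - x 0)).toReal := by
    have hc1 := concave_shift_right hK (p := t1 - x 0) (q := t1 - y 0) (Δ := s2 - t1)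
      (by linarith) (by linarith) (by linarith) (by linarith [hs201.2, hy0m.1])
    rw [show t1 - y 0 + (s2 - t1) = s2 - y 0 by ring,
      show t1 - x 0 + (s2 - t1) = s2 - x 0 by ring] at hc1
    exact toReal4 hc1 (hterm1.2 0) (hterms.2 0) (hK.1 _) (hK.1 _) ht1y0 hs2x0
      (hK.1 _) (hK.1 _)
  -- transport of node 2 difference from t1 up to s2 (left side)
  have mono2 : (K (t1 - x 2)).toReal + (K (s2 - y 2)).toReal
      ≤ (K (t1 - y 2)).toReal + (K (s2 - x 2)).toReal := by
    have hc1 := concave_shift_left hK (p := t1 - x 2) (q := t1 - y 2) (Δ := s2 - t1)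
      (by linarith [ht101.1, hx2m.2]) (by linarith) (by linarith) (by linarith)
    rw [show t1 - y 2 + (s2 - t1) = s2 - y 2 by ring,
      show t1 - x 2 + (s2 - t1) = s2 - x 2 by ring] at hc1
    exact toReal4 hc1 (hterm1.2 2) (hterms.2 2) (hK.1 _) (hK.1 _) ht1y2 hs2x2
      (hK.1 _) (hK.1 _)
  -- strict inequality for node 1 at t1
  have strict1 : (K (t1 - x 1)).toReal < (K (t1 - y 1)).toReal := by
    have h := K_anti_strict hK hSM (a := t1 - y 1) (b := t1 - x 1)
      (by linarith [ht101.1, hy1m.2]) (by linarith) (by linarith)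
    rw [← EReal.coe_toReal (hK.1 (t1 - x 1)) h1x1b,
      ← EReal.coe_toReal (hK.1 (t1 - y 1)) ht1y1, EReal.coe_lt_coe_iff] at h
    exact h
  have m0 := mul_le_mul_of_nonneg_left mono0 (hν 0).le
  have m1 := mul_le_mul_of_nonneg_left mono1 (hν 1).le
  have m2 := mul_le_mul_of_nonneg_left mono2 (hν 2).le
  have msign0 := mul_le_mul_of_nonneg_left sign0 (hν 0).le
  have msign2 := mul_le_mul_of_nonneg_left sign2 (hν 2).le
  have mstrict := mul_lt_mul_of_pos_left strict1 (hν 1)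
  rw [mul_add, mul_add] at m0 m1 m2
  linarith [hd1x, hd1y, hd3x, hd3y, hdsy, hdsx, hccr, m0, m1, m2, msign0, msign2, mstrict]

end Case4B

end EquiAux2

namespace EquiAux2
open Set Filter Topology EquiAux

lemma get_split {n : ℕ} {w w' : Fin n → ℝ}
    (hnotP : ¬ ∃ a b : Fin n, (a:ℕ) < (b:ℕ) ∧ w' a < w a ∧ w b < w' b) :
    ∃ j : Fin (n+1), ∀ i : Fin n,
      ((i:ℕ) < (j:ℕ) → w i ≤ w' i) ∧ ((j:ℕ) ≤ (i:ℕ) → w' i ≤ w i) := by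
  classical
  by_cases hL : ∃ i : Fin n, w i < w' i
  · set S := Finset.univ.filter (fun i : Fin n => w i < w' i) with hS
    have hSne : S.Nonempty := by
      obtain ⟨i, hi⟩ := hL
      exact ⟨i, by simp [hS, hi]⟩
    obtain ⟨l, hlS, hlmax⟩ := S.exists_max_image (fun i => (i:ℕ)) hSne
    have hlL : w l < w' l := by simpa [hS] using hlS
    have hln : (l:ℕ) < n := l.2
    refine ⟨⟨(l:ℕ)+1, by omega⟩, fun i => ⟨?_, ?_⟩⟩
    · intro hi
      by_contra hgt
      push_neg at hgt
      have hil : (i:ℕ) ≤ (l:ℕ) := by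
        simpa using Nat.lt_succ_iff.mp hi
      rcases eq_or_lt_of_le hil with heq | hlt
      · have : i = l := Fin.ext heq
        rw [this] at hgt
        linarith
      · exact hnotP ⟨i, l, hlt, hgt, hlL⟩
    · intro hi
      by_contra hgt
      push_neg at hgt
      have hmem : i ∈ S := by simp [hS, hgt]
      have := hlmax i hmem
      simp only [] at hi
      omega
  · push_neg at hL
    refine ⟨0, fun i => ⟨fun h => absurd h (by simp), fun _ => hL i⟩⟩

end EquiAux2

open EquiAux EquiAux2 in
/-- For `n ∈ {1,2,3}` there is at most one equioscillation point. -/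
theorem equioscillation_unique (n : ℕ) (hn : n = 1 ∨ n = 2 ∨ n = 3)
    (ν : Fin n → ℝ) (hν : ∀ i, 0 < ν i)
    (K J : ℝ → EReal) (hK : KernelFun K) (hSC : KStrictConcave K) (hSM : KStrictMonotone K)
    (hJ : NFieldFun n J) (hJusc : UpperSemicontinuousOn J (Icc (0:ℝ) 1))
    (w w' : Fin n → ℝ) (hw : closedSimplex n w) (hw' : closedSimplex n w')
    (heqw : ∀ j k, intMax n ν K J w j = intMax n ν K J w k)
    (hfinw : ∀ j, intMax n ν K J w j ≠ ⊥)
    (heqw' : ∀ j k, intMax n ν K J w' j = intMax n ν K J w' k)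
    (hfinw' : ∀ j, intMax n ν K J w' j ≠ ⊥) :
    w = w' := by
  classical
  by_contra hnefun
  set c := intMax n ν K J w 0 with hcdef
  set c' := intMax n ν K J w' 0 with hc'def
  have hcx : ∀ j, intMax n ν K J w j = c := fun j => heqw j 0
  have hcy : ∀ j, intMax n ν K J w' j = c' := fun j => heqw' j 0
  have hcb : c ≠ ⊥ := hfinw 0
  have hc'b : c' ≠ ⊥ := hfinw' 0
  have hne' : ∃ i, w i ≠ w' i := by
    by_contra h
    push_neg at h
    exact hnefun (funext h)
  obtain ⟨i₀, hi₀⟩ := hne'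
  by_cases hP : ∃ a b : Fin n, (a:ℕ) < (b:ℕ) ∧ w' a < w a ∧ w b < w' b
  · by_cases hQ : ∃ a b : Fin n, (a:ℕ) < (b:ℕ) ∧ w a < w' a ∧ w' b < w b
    · -- both fail : n must be 3, pattern (−,+,−) or (+,−,+)
      obtain ⟨r, l, hrl, hRr, hLl⟩ := hP
      obtain ⟨l', r', hlr, hLl', hRr'⟩ := hQ
      rcases hn with rfl | rfl | rfl
      · omega
      · -- n = 2
        have hr0 : r = 0 := Fin.ext (by omega)
        have hl'0 : l' = 0 := Fin.ext (by omega)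
        rw [hr0] at hRr
        rw [hl'0] at hLl'
        linarith
      · -- n = 3
        have hpattern : (w 0 < w' 0 ∧ w' 1 < w 1 ∧ w 2 < w' 2) ∨
            (w' 0 < w 0 ∧ w 1 < w' 1 ∧ w' 2 < w 2) := by
          by_cases hmid : w 1 < w' 1
          · -- L 1 : r and r' avoid index 1
            right
            have hr0 : r = 0 := by
              apply Fin.ext
              have : (r:ℕ) ≠ 1 := by
                intro h
                rw [show r = 1 from Fin.ext h] at hRr
                linarith
              omega
            have hr'2 : r' = 2 := by
              apply Fin.ext
              have : (r':ℕ) ≠ 1 := by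
                intro h
                rw [show r' = 1 from Fin.ext h] at hRr'
                linarith
              omega
            rw [hr0] at hRr
            rw [hr'2] at hRr'
            exact ⟨hRr, hmid, hRr'⟩
          · left
            have hl2 : l = 2 := by
              apply Fin.ext
              have : (l:ℕ) ≠ 1 := by
                intro h
                rw [show l = 1 from Fin.ext h] at hLl
                exact hmid hLl
              omega
            have hl'0 : l' = 0 := by
              apply Fin.ext
              have : (l':ℕ) ≠ 1 := by
                intro h
                rw [show l' = 1 from Fin.ext h] at hLl'
                exact hmid hLl'
              omega
            have hr1 : r = 1 := by
              apply Fin.ext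
              have hne0 : (r:ℕ) ≠ 0 := by
                intro h
                rw [show r = 0 from Fin.ext h] at hRr
                rw [hl'0] at hLl'
                linarith
              have := hrl
              rw [hl2] at this
              omega
            rw [hl'0] at hLl'
            rw [hr1] at hRr
            rw [hl2] at hLl
            exact ⟨hLl', hRr, hLl⟩
        rcases hpattern with ⟨p0, p1, p2⟩ | ⟨p0, p1, p2⟩
        · -- pattern (−,+,−) for (w,w')
          rcases le_total c' c with hcc | hcc
          · exact case4A hν hK hSM hJ hJusc hw hw' hcx hcy hcb hc'b p0 p1 p2 hcc
          · exact case4B hν hK hSM hJ hJusc hw' hw hcy hcx hc'b hcb p0 p1 p2 hcc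
        · rcases le_total c' c with hcc | hcc
          · exact case4B hν hK hSM hJ hJusc hw hw' hcx hcy hcb hc'b p0 p1 p2 hcc
          · exact case4A hν hK hSM hJ hJusc hw' hw hcy hcx hc'b hcb p0 p1 p2 hcc
    · -- P holds, Q fails : B-split exists for (w,w'), i.e. A-split for (w',w)
      obtain ⟨j, hsplit⟩ := get_split (w := w') (w' := w) (by
        intro ⟨a, b, hab, h1, h2⟩
        exact hQ ⟨a, b, hab, h1, h2⟩)
      have hlt : c < c' := step1 hν hK hSM hJ hJusc hw' hw hcy hcx hcb j hsplit i₀ (Ne.symm hi₀)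
      -- now use step2a with x := w', y := w
      set SR := Finset.univ.filter (fun i : Fin n => w' i < w i) with hSR
      set SL := Finset.univ.filter (fun i : Fin n => w i < w' i) with hSL
      obtain ⟨a, b, hab, hwa, hwb⟩ := hP
      have hRne : SR.Nonempty := ⟨a, by simp [hSR, hwa]⟩
      have hLne : SL.Nonempty := ⟨b, by simp [hSL, hwb]⟩
      obtain ⟨p, hpS, hpmax⟩ := SR.exists_max_image (fun i => (i:ℕ)) hRne
      obtain ⟨q, hqS, hqmin⟩ := SL.exists_min_image (fun i => (i:ℕ)) hLne
      have hpR : w' p < w p := by simpa [hSR] using hpS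
      have hqL : w q < w' q := by simpa [hSL] using hqS
      have hpq : (p:ℕ) < (q:ℕ) := by
        rcases lt_trichotomy (p:ℕ) (q:ℕ) with h | h | h
        · exact h
        · exfalso; rw [show q = p from Fin.ext h.symm] at hqL; linarith
        · exact absurd ⟨q, p, h, by exact hqL, by exact hpR⟩ hQ
      refine step2a hν hK hSM hJ hJusc hw' hw hcy hcx hc'b hcb hpq hpR hqL ?_ ?_ hlt
      · intro i hi
        exact hpmax i (by simp [hSR, hi])
      · intro i hi
        exact hqmin i (by simp [hSL, hi])
  · -- P fails : A-split exists for (w,w')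
    obtain ⟨j, hsplit⟩ := get_split (w := w) (w' := w') hP
    have hlt : c' < c := step1 hν hK hSM hJ hJusc hw hw' hcx hcy hc'b j hsplit i₀ hi₀
    by_cases hQ : ∃ a b : Fin n, (a:ℕ) < (b:ℕ) ∧ w a < w' a ∧ w' b < w b
    · -- apply step2a with x := w, y := w'
      set SL := Finset.univ.filter (fun i : Fin n => w i < w' i) with hSL
      set SR := Finset.univ.filter (fun i : Fin n => w' i < w i) with hSR
      obtain ⟨a, b, hab, hwa, hwb⟩ := hQ
      have hLne : SL.Nonempty := ⟨a, by simp [hSL, hwa]⟩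
      have hRne : SR.Nonempty := ⟨b, by simp [hSR, hwb]⟩
      obtain ⟨p, hpS, hpmax⟩ := SL.exists_max_image (fun i => (i:ℕ)) hLne
      obtain ⟨q, hqS, hqmin⟩ := SR.exists_min_image (fun i => (i:ℕ)) hRne
      have hpL : w p < w' p := by simpa [hSL] using hpS
      have hqR : w' q < w q := by simpa [hSR] using hqS
      have hpq : (p:ℕ) < (q:ℕ) := by
        rcases lt_trichotomy (p:ℕ) (q:ℕ) with h | h | h
        · exact h
        · exfalso; rw [show q = p from Fin.ext h.symm] at hqR; linarith
        · exact absurd ⟨q, p, h, by exact hqR, by exact hpL⟩ hP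
      refine step2a hν hK hSM hJ hJusc hw hw' hcx hcy hcb hc'b hpq hpL hqR ?_ ?_ hlt
      · intro i hi
        exact hpmax i (by simp [hSL, hi])
      · intro i hi
        exact hqmin i (by simp [hSR, hi])
    · -- both splits exist : contradiction
      obtain ⟨j', hsplit'⟩ := get_split (w := w') (w' := w) (by
        intro ⟨a, b, hab, h1, h2⟩
        exact hQ ⟨a, b, hab, h1, h2⟩)
      have hlt' : c < c' :=
        step1 hν hK hSM hJ hJusc hw' hw hcy hcx hcb j' hsplit' i₀ (Ne.symm hi₀)
      exact absurd hlt (not_lt.mpr hlt'.le)
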